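/- arXiv:2409.07093 — 3 statements merged into one kernel-verified Lean document; each statement's English description precedes it below -/
import Mathlib

section
/- Let Λ = (λ_k)_{k∈ℤ} be a strictly increasing sequence of real numbers such that λ_{k+1} − λ_k → +∞ as k → ±∞, and assume in addition that the series ∑_{k∈ℤ} 1/(1+|λ_k|) converges. Then for every T > 0 there exists a constant A > 0 (depending only on T and Λ) such that for every N ≥ 1 and every sequence of complex numbers (a_k)_{|k|≤N}, one has A · max_{|k|≤N} |a_k| ≤ (1/T) ∫_{−T/2}^{T/2} |∑_{k=−N}^{N} a_k e^{2πi λ_k t}| dt. -/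
open Real MeasureTheory Filter Finset intervalIntegral

noncomputable section

namespace IK

def ee (lam t : ℝ) : ℂ := Complex.exp (2 * Real.pi * Complex.I * lam * t)

lemma ee_eq_exp (lam t : ℝ) : ee lam t = Complex.exp ((2 * Real.pi * Complex.I * lam) * t) := by
  rw [ee, mul_assoc]

lemma continuous_ee (lam : ℝ) : Continuous (ee lam) := by
  have : ee lam = fun t : ℝ => Complex.exp ((2 * Real.pi * Complex.I * lam) * t) := by
    funext t; exact ee_eq_exp lam t
  rw [this]
  exact Complex.continuous_exp.comp (continuous_const.mul Complex.continuous_ofReal)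

lemma norm_ee (lam t : ℝ) : ‖ee lam t‖ = 1 := by
  rw [ee]
  rw [show (2 * (Real.pi:ℂ) * Complex.I * lam * t) = ((2 * Real.pi * lam * t : ℝ) : ℂ) * Complex.I by push_cast; ring]
  rw [Complex.norm_exp_ofReal_mul_I]

lemma ee_zero_freq (t : ℝ) : ee 0 t = 1 := by simp [ee]

lemma ee_sub (lam t u : ℝ) : ee lam (t - u) = ee lam t * ee (-lam) u := by
  simp only [ee, ← Complex.exp_add]
  congr 1
  push_cast
  ring

lemma ee_add_arg (lam t h : ℝ) : ee lam (t + h) = ee lam t * ee lam h := by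
  simp only [ee, ← Complex.exp_add]
  congr 1
  push_cast
  ring

lemma ee_freq_sub (lam rho t : ℝ) : ee (lam - rho) t = ee lam t * ee (-rho) t := by
  simp only [ee, ← Complex.exp_add]
  congr 1
  push_cast
  ring

/-- the polynomial -/
def P (Λ : ℤ → ℝ) (s : Finset ℤ) (a : ℤ → ℂ) (t : ℝ) : ℂ := ∑ j ∈ s, a j * ee (Λ j) t

lemma continuous_P (Λ : ℤ → ℝ) (s : Finset ℤ) (a : ℤ → ℂ) : Continuous (P Λ s a) :=
  continuous_finset_sum s fun j _ => continuous_const.mul (continuous_ee (Λ j))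

def II (ℓ mu : ℝ) : ℂ := ∫ v in (0:ℝ)..ℓ, ee mu v

lemma II_zero (ℓ : ℝ) : II ℓ 0 = (ℓ : ℂ) := by
  simp [II, ee_zero_freq]

lemma II_ne (ℓ mu : ℝ) (hmu : mu ≠ 0) :
    II ℓ mu = (ee mu ℓ - 1) / (2 * Real.pi * Complex.I * mu) := by
  have hc : (2 * (Real.pi:ℂ) * Complex.I * mu) ≠ 0 := by
    simp [Complex.ext_iff, Real.pi_ne_zero, hmu, Complex.I_ne_zero]
  simp only [II, ee_eq_exp]
  rw [integral_exp_mul_complex hc]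
  norm_num [ee_eq_exp]

lemma norm_II_le_len (ℓ mu : ℝ) (hℓ : 0 ≤ ℓ) : ‖II ℓ mu‖ ≤ ℓ := by
  have := intervalIntegral.norm_integral_le_of_norm_le_const
    (C := 1) (f := fun v => ee mu v) (a := (0:ℝ)) (b := ℓ) (fun x _ => by rw [norm_ee])
  simpa [II, abs_of_nonneg hℓ] using this

lemma norm_II_le_inv (ℓ mu : ℝ) (hmu : mu ≠ 0) : ‖II ℓ mu‖ ≤ 1 / (Real.pi * |mu|) := by
  rw [II_ne ℓ mu hmu]
  rw [norm_div]
  have h1 : ‖ee mu ℓ - 1‖ ≤ 2 := by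
    calc ‖ee mu ℓ - 1‖ ≤ ‖ee mu ℓ‖ + ‖(1:ℂ)‖ := norm_sub_le _ _
    _ = 2 := by rw [norm_ee]; norm_num
  have h2 : ‖(2 * (Real.pi:ℂ) * Complex.I * mu)‖ = 2 * Real.pi * |mu| := by
    simp [norm_mul, Complex.norm_I, Complex.norm_real, Real.norm_eq_abs,
      abs_of_nonneg Real.pi_pos.le]
  rw [h2]
  rw [div_le_div_iff₀ (by positivity) (by positivity)]
  have hp : (0:ℝ) < Real.pi * |mu| := by positivity
  nlinarith [mul_le_mul_of_nonneg_right h1 hp.le]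

lemma prod_II (ℓ mu : ℝ) (hmu : mu ≠ 0) :
    ∃ r : ℝ, II ℓ mu * II ℓ (-mu) = (r:ℂ) ∧ 0 ≤ r ∧ r ≤ 1/(Real.pi^2 * mu^2) := by
  have hconj : ee (-mu) ℓ = starRingEnd ℂ (ee mu ℓ) := by
    rw [ee, ee, ← Complex.exp_conj]
    congr 1
    simp [Complex.ext_iff]
  refine ⟨Complex.normSq (ee mu ℓ - 1) / (4 * Real.pi^2 * mu^2), ?_, div_nonneg (Complex.normSq_nonneg _) (by positivity), ?_⟩
  · rw [II_ne _ _ hmu, II_ne _ _ (neg_ne_zero.2 hmu), hconj]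
    rw [div_mul_div_comm]
    have hnum : (ee mu ℓ - 1) * (starRingEnd ℂ (ee mu ℓ) - 1)
        = ((Complex.normSq (ee mu ℓ - 1) : ℝ) : ℂ) := by
      rw [show (starRingEnd ℂ (ee mu ℓ) - 1) = starRingEnd ℂ (ee mu ℓ - 1) by
        rw [map_sub, map_one]]
      exact Complex.mul_conj _
    have hden : (2 * (Real.pi:ℂ) * Complex.I * mu) * (2 * (Real.pi:ℂ) * Complex.I * (-mu:ℝ))
        = ((4 * Real.pi^2 * mu^2 : ℝ) : ℂ) := by
      push_cast
      have : Complex.I * Complex.I = -1 := Complex.I_mul_I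
      ring_nf
      rw [Complex.I_sq]
      ring
    rw [hnum, hden, ← Complex.ofReal_div]
  · have h1 : ‖ee mu ℓ - 1‖ ≤ 2 := by
      calc ‖ee mu ℓ - 1‖ ≤ ‖ee mu ℓ‖ + ‖(1:ℂ)‖ := norm_sub_le _ _
      _ = 2 := by rw [norm_ee]; norm_num
    have h2 : Complex.normSq (ee mu ℓ - 1) ≤ 4 := by
      rw [Complex.normSq_eq_norm_sq]
      have : ‖ee mu ℓ - 1‖ ≤ 2 := h1
      nlinarith [norm_nonneg (ee mu ℓ - 1)]
    rw [div_le_div_iff₀ (by positivity) (by positivity)]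
    nlinarith [sq_nonneg mu, Real.pi_pos, sq_nonneg (Real.pi * mu)]

lemma extraction (Λ : ℤ → ℝ) (s : Finset ℤ) (a : ℤ → ℂ) (k : ℤ) (hk : k ∈ s)
    (ℓ : ℝ) (hℓ : 0 < ℓ) (hΛk : Λ k = 0) (hne : ∀ j ∈ s, j ≠ k → Λ j ≠ 0)
    (M : ℝ) (hM : ∀ j ∈ s, j ≠ k → ‖a j‖ ≤ M) :
    ‖a k‖ * ℓ^2 ≤ ℓ * (∫ t in (-ℓ)..ℓ, ‖P Λ s a t‖)
      + M * ∑ j ∈ s.erase k, 1/(Real.pi^2 * (Λ j)^2) := by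
  set J := ∫ t in (-ℓ)..ℓ, ‖P Λ s a t‖ with hJdef
  have inner_eq : ∀ u : ℝ, (∫ v in (0:ℝ)..ℓ, P Λ s a (v - u))
      = ∑ j ∈ s, (a j * II ℓ (Λ j)) * ee (-(Λ j)) u := by
    intro u
    have hpt : ∀ v : ℝ, P Λ s a (v - u) = ∑ j ∈ s, (a j * ee (-(Λ j)) u) * ee (Λ j) v := by
      intro v; rw [P]; apply Finset.sum_congr rfl; intro j _
      rw [ee_sub]; ring
    rw [intervalIntegral.integral_congr
      (g := fun v => ∑ j ∈ s, (a j * ee (-(Λ j)) u) * ee (Λ j) v) (fun v _ => hpt v)]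
    rw [intervalIntegral.integral_finset_sum (f := fun j v => (a j * ee (-(Λ j)) u) * ee (Λ j) v)
      (fun j _ => (continuous_const.mul (continuous_ee _)).intervalIntegrable _ _)]
    apply Finset.sum_congr rfl; intro j _
    simp only [intervalIntegral.integral_const_mul, II]; ring
  have Qeq : (∫ u in (0:ℝ)..ℓ, (∫ v in (0:ℝ)..ℓ, P Λ s a (v - u)))
      = ∑ j ∈ s, a j * (II ℓ (Λ j) * II ℓ (-(Λ j))) := by
    rw [intervalIntegral.integral_congr
      (g := fun u => ∑ j ∈ s, (a j * II ℓ (Λ j)) * ee (-(Λ j)) u) (fun u _ => inner_eq u)]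
    rw [intervalIntegral.integral_finset_sum (f := fun j u => (a j * II ℓ (Λ j)) * ee (-(Λ j)) u)
      (fun j _ => (continuous_const.mul (continuous_ee _)).intervalIntegrable _ _)]
    apply Finset.sum_congr rfl; intro j _
    simp only [intervalIntegral.integral_const_mul, II]; ring
  have Qle : ‖∫ u in (0:ℝ)..ℓ, (∫ v in (0:ℝ)..ℓ, P Λ s a (v - u))‖ ≤ J * ℓ := by
    have hb : ∀ u ∈ Set.uIoc (0:ℝ) ℓ, ‖∫ v in (0:ℝ)..ℓ, P Λ s a (v - u)‖ ≤ J := by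
      intro u hu
      rw [Set.uIoc_of_le hℓ.le] at hu
      calc ‖∫ v in (0:ℝ)..ℓ, P Λ s a (v - u)‖
          ≤ ∫ v in (0:ℝ)..ℓ, ‖P Λ s a (v - u)‖ :=
            intervalIntegral.norm_integral_le_integral_norm hℓ.le
        _ = ∫ t in (0 - u)..(ℓ - u), ‖P Λ s a t‖ :=
            intervalIntegral.integral_comp_sub_right (fun t => ‖P Λ s a t‖) u
        _ ≤ J := by
            apply intervalIntegral.integral_mono_interval (by linarith [hu.2] : -ℓ ≤ 0 - u)
              (by linarith : 0 - u ≤ ℓ - u) (by linarith [hu.1] : ℓ - u ≤ ℓ)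
              (Filter.Eventually.of_forall (fun t => norm_nonneg _))
              (((continuous_P Λ s a).norm).intervalIntegrable _ _)
    calc ‖∫ u in (0:ℝ)..ℓ, (∫ v in (0:ℝ)..ℓ, P Λ s a (v - u))‖ ≤ J * |ℓ - 0| :=
        intervalIntegral.norm_integral_le_of_norm_le_const hb
      _ = J * ℓ := by rw [sub_zero, abs_of_nonneg hℓ.le]
  -- pick r_j bounds
  have hterm : ∀ j ∈ s.erase k, ‖a j * (II ℓ (Λ j) * II ℓ (-(Λ j)))‖
      ≤ M * (1/(Real.pi^2 * (Λ j)^2)) := by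
    intro j hj
    obtain ⟨hjk, hjs⟩ := Finset.mem_erase.1 hj
    obtain ⟨r, hr, hr0, hrle⟩ := prod_II ℓ (Λ j) (hne j hjs hjk)
    rw [hr, norm_mul, Complex.norm_real, Real.norm_eq_abs, abs_of_nonneg hr0]
    have hMj : ‖a j‖ ≤ M := hM j hjs hjk
    have hM0 : (0:ℝ) ≤ M := le_trans (norm_nonneg _) hMj
    exact mul_le_mul hMj hrle hr0 hM0
  have hsplit : a k * (II ℓ (Λ k) * II ℓ (-(Λ k)))
      + ∑ j ∈ s.erase k, a j * (II ℓ (Λ j) * II ℓ (-(Λ j)))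
      = ∑ j ∈ s, a j * (II ℓ (Λ j) * II ℓ (-(Λ j))) := Finset.add_sum_erase s (fun j => a j * (II ℓ (Λ j) * II ℓ (-(Λ j)))) hk
  have hkterm : a k * (II ℓ (Λ k) * II ℓ (-(Λ k))) = a k * ((ℓ:ℂ)^2) := by
    rw [hΛk, neg_zero, II_zero]; ring
  have key : a k * ((ℓ:ℂ)^2) = (∫ u in (0:ℝ)..ℓ, (∫ v in (0:ℝ)..ℓ, P Λ s a (v - u)))
      - ∑ j ∈ s.erase k, a j * (II ℓ (Λ j) * II ℓ (-(Λ j))) := by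
    rw [Qeq, ← hsplit, hkterm]; ring
  have hnorm : ‖a k‖ * ℓ^2 = ‖a k * ((ℓ:ℂ)^2)‖ := by
    rw [norm_mul]
    congr 1
    rw [show ((ℓ:ℂ)^2) = ((ℓ^2 : ℝ) : ℂ) by push_cast; ring]
    rw [Complex.norm_real, Real.norm_eq_abs, abs_of_nonneg (by positivity)]
  rw [hnorm, key]
  calc ‖_ - _‖ ≤ ‖(∫ u in (0:ℝ)..ℓ, (∫ v in (0:ℝ)..ℓ, P Λ s a (v - u)))‖
        + ‖∑ j ∈ s.erase k, a j * (II ℓ (Λ j) * II ℓ (-(Λ j)))‖ := norm_sub_le _ _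
    _ ≤ J * ℓ + ∑ j ∈ s.erase k, M * (1/(Real.pi^2 * (Λ j)^2)) := by
        apply add_le_add Qle
        exact le_trans (norm_sum_le _ _) (Finset.sum_le_sum hterm)
    _ = ℓ * J + M * ∑ j ∈ s.erase k, 1/(Real.pi^2 * (Λ j)^2) := by
        rw [Finset.mul_sum]; ring

lemma sum_inv_sq_aux : ∀ M : ℕ, 1 ≤ M → ∑ n ∈ Finset.Icc 1 M, (1:ℝ)/(n:ℝ)^2 ≤ 2 - 1/(M:ℝ) := by
  intro M
  induction M with
  | zero => intro h; omega
  | succ m ih =>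
    intro _
    rcases Nat.eq_zero_or_pos m with h|h
    · subst h; norm_num
    · rw [Finset.sum_Icc_succ_top (by omega : 1 ≤ m+1)]
      have h1 : (1:ℝ) ≤ (m:ℝ) := by exact_mod_cast h
      have := ih h
      have hm : (0:ℝ) < (m:ℝ) := by linarith
      have hm1 : (0:ℝ) < ((m:ℕ):ℝ) + 1 := by linarith
      push_cast
      push_cast at this
      have key : 1/((m:ℝ)+1)^2 ≤ 1/(m:ℝ) - 1/((m:ℝ)+1) := by
        rw [div_sub_div _ _ (ne_of_gt hm) (ne_of_gt hm1)]
        rw [div_le_div_iff₀ (by positivity) (by positivity)]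
        ring_nf
        nlinarith [hm]
      linarith

lemma sum_inv_sq_le (s : Finset ℤ) (g : ℤ → ℕ) (hg1 : ∀ j ∈ s, 1 ≤ g j)
    (hginj : Set.InjOn g s) : ∑ j ∈ s, (1:ℝ)/((g j : ℝ))^2 ≤ 2 := by
  rcases s.eq_empty_or_nonempty with h|h
  · simp [h]
  rw [← Finset.sum_image (f := fun n : ℕ => (1:ℝ)/((n:ℝ))^2) (g := g)
    (fun x hx y hy hxy => hginj hx hy hxy)]
  have hB : s.image g ⊆ Finset.Icc 1 ((s.image g).sup id) := by
    intro n hn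
    rw [Finset.mem_Icc]
    obtain ⟨j, hj, rfl⟩ := Finset.mem_image.1 hn
    exact ⟨hg1 j hj, Finset.le_sup (f := id) hn⟩
  have hBpos : 1 ≤ (s.image g).sup id := by
    obtain ⟨j, hj⟩ := h
    exact le_trans (hg1 j hj) (Finset.le_sup (f := id) (Finset.mem_image_of_mem g hj))
  calc ∑ n ∈ s.image g, (1:ℝ)/((n:ℝ))^2
      ≤ ∑ n ∈ Finset.Icc 1 ((s.image g).sup id), (1:ℝ)/((n:ℝ))^2 :=
        Finset.sum_le_sum_of_subset_of_nonneg hB (fun i _ _ => by positivity)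
    _ ≤ 2 - 1/(((s.image g).sup id : ℕ):ℝ) := sum_inv_sq_aux _ hBpos
    _ ≤ 2 := by
        have : (0:ℝ) < (((s.image g).sup id : ℕ):ℝ) := by exact_mod_cast hBpos
        have := one_div_pos.2 this
        linarith

lemma telescope (f : ℤ → ℝ) (a : ℤ) : ∀ b : ℤ, a ≤ b →
    ∑ i ∈ Finset.Ico a b, (f (i+1) - f i) = f b - f a := by
  refine Int.le_induction ?_ ?_
  · simp
  · intro b hab ih
    have hins : Finset.Ico a (b+1) = insert b (Finset.Ico a b) := by
      ext x; simp only [Finset.mem_Ico, Finset.mem_insert]; omega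
    rw [hins, Finset.sum_insert (by simp), ih]
    ring

section SumFreq

variable (Λ : ℤ → ℝ) (G' : ℤ → Prop) [DecidablePred G'] (γ : ℝ)

def cntR (k j : ℤ) : ℕ := ((Finset.Ico k j).filter G').card
def cntL (k j : ℤ) : ℕ := ((Finset.Ico j k).filter G').card

lemma dist_geR (hgap0 : ∀ i : ℤ, 0 ≤ Λ (i+1) - Λ i)
    (hgapγ : ∀ i : ℤ, G' i → γ ≤ Λ (i+1) - Λ i) (k j : ℤ) (hjk : k < j) :
    γ * (cntR G' k j : ℝ) ≤ Λ j - Λ k := by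
  rw [← telescope Λ k j hjk.le]
  calc γ * (cntR G' k j : ℝ)
      = (cntR G' k j) • γ := by rw [nsmul_eq_mul]; ring
    _ ≤ ∑ i ∈ (Finset.Ico k j).filter G', (Λ (i+1) - Λ i) :=
        Finset.card_nsmul_le_sum _ _ _ (fun i hi => hgapγ i (Finset.mem_filter.1 hi).2)
    _ ≤ ∑ i ∈ Finset.Ico k j, (Λ (i+1) - Λ i) :=
        Finset.sum_le_sum_of_subset_of_nonneg (Finset.filter_subset _ _)
          (fun i _ _ => hgap0 i)

lemma dist_geL (hgap0 : ∀ i : ℤ, 0 ≤ Λ (i+1) - Λ i)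
    (hgapγ : ∀ i : ℤ, G' i → γ ≤ Λ (i+1) - Λ i) (k j : ℤ) (hjk : j < k) :
    γ * (cntL G' k j : ℝ) ≤ Λ k - Λ j := by
  rw [← telescope Λ j k hjk.le]
  calc γ * (cntL G' k j : ℝ)
      = (cntL G' k j) • γ := by rw [nsmul_eq_mul]; ring
    _ ≤ ∑ i ∈ (Finset.Ico j k).filter G', (Λ (i+1) - Λ i) :=
        Finset.card_nsmul_le_sum _ _ _ (fun i hi => hgapγ i (Finset.mem_filter.1 hi).2)
    _ ≤ ∑ i ∈ Finset.Ico j k, (Λ (i+1) - Λ i) :=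
        Finset.sum_le_sum_of_subset_of_nonneg (Finset.filter_subset _ _)
          (fun i _ _ => hgap0 i)

lemma cntR_pos (k : ℤ) (hGk : G' k) (j : ℤ) (hjk : k < j) : 1 ≤ cntR G' k j := by
  rw [cntR, Nat.succ_le_iff, Finset.card_pos]
  exact ⟨k, Finset.mem_filter.2 ⟨Finset.mem_Ico.2 ⟨le_refl k, hjk⟩, hGk⟩⟩

lemma cntL_pos (k : ℤ) (j : ℤ) (hGj : G' j) (hjk : j < k) : 1 ≤ cntL G' k j := by
  rw [cntL, Nat.succ_le_iff, Finset.card_pos]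
  exact ⟨j, Finset.mem_filter.2 ⟨Finset.mem_Ico.2 ⟨le_refl j, hjk⟩, hGj⟩⟩

lemma cntR_strict (k j1 j2 : ℤ) (hk : k < j1) (h12 : j1 < j2) (hG1 : G' j1) :
    cntR G' k j1 < cntR G' k j2 := by
  have hsub : insert j1 ((Finset.Ico k j1).filter G') ⊆ (Finset.Ico k j2).filter G' := by
    intro x hx
    rcases Finset.mem_insert.1 hx with rfl | hx
    · exact Finset.mem_filter.2 ⟨Finset.mem_Ico.2 ⟨hk.le, h12⟩, hG1⟩
    · obtain ⟨hx1, hx2⟩ := Finset.mem_filter.1 hx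
      obtain ⟨ha, hb⟩ := Finset.mem_Ico.1 hx1
      exact Finset.mem_filter.2 ⟨Finset.mem_Ico.2 ⟨ha, by omega⟩, hx2⟩
  have hnotin : j1 ∉ (Finset.Ico k j1).filter G' := by
    simp [Finset.mem_filter, Finset.mem_Ico]
  calc cntR G' k j1 < (insert j1 ((Finset.Ico k j1).filter G')).card := by
        rw [cntR, Finset.card_insert_of_notMem hnotin]; omega
    _ ≤ cntR G' k j2 := Finset.card_le_card hsub

lemma cntL_strict (k j1 j2 : ℤ) (h12 : j1 < j2) (hk : j2 < k) (hG2 : G' j2)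
    (hG1 : G' j1) : cntL G' k j2 < cntL G' k j1 := by
  have hsub : insert j1 ((Finset.Ico j2 k).filter G') ⊆ (Finset.Ico j1 k).filter G' := by
    intro x hx
    rcases Finset.mem_insert.1 hx with rfl | hx
    · exact Finset.mem_filter.2 ⟨Finset.mem_Ico.2 ⟨le_refl _, by omega⟩, hG1⟩
    · obtain ⟨hx1, hx2⟩ := Finset.mem_filter.1 hx
      obtain ⟨ha, hb⟩ := Finset.mem_Ico.1 hx1
      exact Finset.mem_filter.2 ⟨Finset.mem_Ico.2 ⟨by omega, hb⟩, hx2⟩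
  have hnotin : j1 ∉ (Finset.Ico j2 k).filter G' := by
    simp only [Finset.mem_filter, Finset.mem_Ico]
    omega
  calc cntL G' k j2 < (insert j1 ((Finset.Ico j2 k).filter G')).card := by
        rw [cntL, Finset.card_insert_of_notMem hnotin]; omega
    _ ≤ cntL G' k j1 := Finset.card_le_card hsub

lemma sum_freq_bound (hγ : 0 < γ)
    (hgap0 : ∀ i : ℤ, 0 ≤ Λ (i+1) - Λ i)
    (hgapγ : ∀ i : ℤ, G' i → γ ≤ Λ (i+1) - Λ i)
    (k : ℤ) (hGk : G' k) (s : Finset ℤ) (hs : ∀ j ∈ s, j ≠ k → G' j) :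
    ∑ j ∈ s.erase k, 1/(Real.pi^2 * (Λ j - Λ k)^2) ≤ 4 / (Real.pi^2 * γ^2) := by
  have hsplit := Finset.sum_filter_add_sum_filter_not (s.erase k) (fun j => k < j)
    (fun j => 1/(Real.pi^2 * (Λ j - Λ k)^2))
  rw [← hsplit]
  have hR : ∑ j ∈ (s.erase k).filter (fun j => k < j), 1/(Real.pi^2 * (Λ j - Λ k)^2)
      ≤ 2 / (Real.pi^2 * γ^2) := by
    have step1 : ∀ j ∈ (s.erase k).filter (fun j => k < j),
        1/(Real.pi^2 * (Λ j - Λ k)^2)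
          ≤ (1/(Real.pi^2 * γ^2)) * (1/((cntR G' k j : ℝ))^2) := by
      intro j hj
      obtain ⟨hj1, hj2⟩ := Finset.mem_filter.1 hj
      obtain ⟨hjne, hjs⟩ := Finset.mem_erase.1 hj1
      have hd := dist_geR Λ G' γ hgap0 hgapγ k j hj2
      have hc : (1:ℝ) ≤ (cntR G' k j : ℝ) := by
        exact_mod_cast cntR_pos G' k hGk j hj2
      have hpos : (0:ℝ) < γ * (cntR G' k j : ℝ) := by positivity
      have hsq : (γ * (cntR G' k j : ℝ))^2 ≤ (Λ j - Λ k)^2 := by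
        apply sq_le_sq' <;> nlinarith
      have hπ : (0:ℝ) < Real.pi ^ 2 := by positivity
      have hΛpos : (0:ℝ) < (Λ j - Λ k)^2 := lt_of_lt_of_le (pow_pos hpos 2) hsq
      rw [one_div_mul_one_div]
      rw [div_le_div_iff₀ (mul_pos hπ hΛpos) (by positivity)]
      nlinarith [mul_le_mul_of_nonneg_left hsq hπ.le]
    calc ∑ j ∈ (s.erase k).filter (fun j => k < j), 1/(Real.pi^2 * (Λ j - Λ k)^2)
        ≤ ∑ j ∈ (s.erase k).filter (fun j => k < j),
            (1/(Real.pi^2 * γ^2)) * (1/((cntR G' k j : ℝ))^2) := Finset.sum_le_sum step1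
      _ = (1/(Real.pi^2 * γ^2)) * ∑ j ∈ (s.erase k).filter (fun j => k < j),
            (1/((cntR G' k j : ℝ))^2) := by rw [Finset.mul_sum]
      _ ≤ (1/(Real.pi^2 * γ^2)) * 2 := by
          apply mul_le_mul_of_nonneg_left _ (by positivity)
          apply sum_inv_sq_le _ (cntR G' k)
          · intro j hj
            obtain ⟨hj1, hj2⟩ := Finset.mem_filter.1 hj
            exact cntR_pos G' k hGk j hj2
          · intro j1 h1 j2 h2 he
            simp only [Finset.coe_filter, Set.mem_setOf_eq] at h1 h2
            by_contra hne
            rcases lt_or_gt_of_ne hne with h | h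
            · have := cntR_strict G' k j1 j2 h1.2 h
                (hs j1 (Finset.mem_erase.1 h1.1).2 (Finset.mem_erase.1 h1.1).1)
              omega
            · have := cntR_strict G' k j2 j1 h2.2 h
                (hs j2 (Finset.mem_erase.1 h2.1).2 (Finset.mem_erase.1 h2.1).1)
              omega
      _ = 2 / (Real.pi^2 * γ^2) := by ring
  have hL : ∑ j ∈ (s.erase k).filter (fun j => ¬ k < j), 1/(Real.pi^2 * (Λ j - Λ k)^2)
      ≤ 2 / (Real.pi^2 * γ^2) := by
    have hlt : ∀ j ∈ (s.erase k).filter (fun j => ¬ k < j), j < k := by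
      intro j hj
      obtain ⟨hj1, hj2⟩ := Finset.mem_filter.1 hj
      have := (Finset.mem_erase.1 hj1).1
      omega
    have step1 : ∀ j ∈ (s.erase k).filter (fun j => ¬ k < j),
        1/(Real.pi^2 * (Λ j - Λ k)^2)
          ≤ (1/(Real.pi^2 * γ^2)) * (1/((cntL G' k j : ℝ))^2) := by
      intro j hj
      obtain ⟨hj1, hj2⟩ := Finset.mem_filter.1 hj
      obtain ⟨hjne, hjs⟩ := Finset.mem_erase.1 hj1
      have hjlt := hlt j hj
      have hGj := hs j hjs hjne
      have hd := dist_geL Λ G' γ hgap0 hgapγ k j hjlt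
      have hc : (1:ℝ) ≤ (cntL G' k j : ℝ) := by
        exact_mod_cast cntL_pos G' k j hGj hjlt
      have hpos : (0:ℝ) < γ * (cntL G' k j : ℝ) := by positivity
      have hsq : (γ * (cntL G' k j : ℝ))^2 ≤ (Λ j - Λ k)^2 := by
        have : (Λ j - Λ k)^2 = (Λ k - Λ j)^2 := by ring
        rw [this]
        apply sq_le_sq' <;> nlinarith
      have hπ : (0:ℝ) < Real.pi ^ 2 := by positivity
      have hΛpos : (0:ℝ) < (Λ j - Λ k)^2 := lt_of_lt_of_le (pow_pos hpos 2) hsq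
      rw [one_div_mul_one_div]
      rw [div_le_div_iff₀ (mul_pos hπ hΛpos) (by positivity)]
      nlinarith [mul_le_mul_of_nonneg_left hsq hπ.le]
    calc ∑ j ∈ (s.erase k).filter (fun j => ¬ k < j), 1/(Real.pi^2 * (Λ j - Λ k)^2)
        ≤ ∑ j ∈ (s.erase k).filter (fun j => ¬ k < j),
            (1/(Real.pi^2 * γ^2)) * (1/((cntL G' k j : ℝ))^2) := Finset.sum_le_sum step1
      _ = (1/(Real.pi^2 * γ^2)) * ∑ j ∈ (s.erase k).filter (fun j => ¬ k < j),
            (1/((cntL G' k j : ℝ))^2) := by rw [Finset.mul_sum]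
      _ ≤ (1/(Real.pi^2 * γ^2)) * 2 := by
          apply mul_le_mul_of_nonneg_left _ (by positivity)
          apply sum_inv_sq_le _ (cntL G' k)
          · intro j hj
            obtain ⟨hj1, hj2⟩ := Finset.mem_filter.1 hj
            exact cntL_pos G' k j
              (hs j (Finset.mem_erase.1 hj1).2 (Finset.mem_erase.1 hj1).1) (hlt j hj)
          · intro j1 h1 j2 h2 he
            have h1' := Finset.mem_coe.1 h1
            have h2' := Finset.mem_coe.1 h2
            by_contra hne
            rcases lt_or_gt_of_ne hne with h | h
            · have := cntL_strict G' k j1 j2 h (hlt j2 h2')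
                (hs j2 (Finset.mem_erase.1 (Finset.mem_filter.1 h2').1).2
                  (Finset.mem_erase.1 (Finset.mem_filter.1 h2').1).1)
                (hs j1 (Finset.mem_erase.1 (Finset.mem_filter.1 h1').1).2
                  (Finset.mem_erase.1 (Finset.mem_filter.1 h1').1).1)
              omega
            · have := cntL_strict G' k j2 j1 h (hlt j1 h1')
                (hs j1 (Finset.mem_erase.1 (Finset.mem_filter.1 h1').1).2
                  (Finset.mem_erase.1 (Finset.mem_filter.1 h1').1).1)
                (hs j2 (Finset.mem_erase.1 (Finset.mem_filter.1 h2').1).2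
                  (Finset.mem_erase.1 (Finset.mem_filter.1 h2').1).1)
              omega
      _ = 2 / (Real.pi^2 * γ^2) := by ring
  have h4 : 2/(Real.pi^2*γ^2) + 2/(Real.pi^2*γ^2) = 4/(Real.pi^2*γ^2) := by ring
  linarith

end SumFreq


lemma extraction' (Λ : ℤ → ℝ) (s : Finset ℤ) (a : ℤ → ℂ) (k : ℤ) (hk : k ∈ s)
    (ℓ : ℝ) (hℓ : 0 < ℓ) (hne : ∀ j ∈ s, j ≠ k → Λ j ≠ Λ k)
    (M : ℝ) (hM : ∀ j ∈ s, j ≠ k → ‖a j‖ ≤ M) :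
    ‖a k‖ * ℓ^2 ≤ ℓ * (∫ t in (-ℓ)..ℓ, ‖P Λ s a t‖)
      + M * ∑ j ∈ s.erase k, 1/(Real.pi^2 * (Λ j - Λ k)^2) := by
  have h := extraction (fun j => Λ j - Λ k) s a k hk ℓ hℓ (by simp)
    (fun j hj hjk => sub_ne_zero.2 (hne j hj hjk)) M hM
  have hint : (∫ t in (-ℓ)..ℓ, ‖P (fun j => Λ j - Λ k) s a t‖)
      = ∫ t in (-ℓ)..ℓ, ‖P Λ s a t‖ := by
    apply intervalIntegral.integral_congr
    intro t _
    have : P (fun j => Λ j - Λ k) s a t = P Λ s a t * ee (-(Λ k)) t := by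
      rw [P, P, Finset.sum_mul]
      apply Finset.sum_congr rfl
      intro j _
      rw [ee_freq_sub]; ring
    simp only [this, norm_mul, norm_ee, mul_one]
  rw [hint] at h
  exact h

lemma sep_of_gap (Λ : ℤ → ℝ) (hmono : StrictMono Λ) (δ : ℝ)
    (hgapδ : ∀ i : ℤ, δ ≤ Λ (i+1) - Λ i) (i j : ℤ) (hij : i < j) : δ ≤ Λ j - Λ i := by
  have h1 := hgapδ i
  have h2 : Λ (i+1) ≤ Λ j := hmono.monotone (by omega)
  linarith

lemma core (Λ : ℤ → ℝ) (hmono : StrictMono Λ) (G' : ℤ → Prop) [DecidablePred G']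
    (γ ℓ : ℝ) (hγ : 0 < γ) (hℓ : 0 < ℓ)
    (hgap0 : ∀ i : ℤ, 0 ≤ Λ (i+1) - Λ i)
    (hgapγ : ∀ i : ℤ, G' i → γ ≤ Λ (i+1) - Λ i)
    (hcond : 4/(Real.pi^2 * γ^2) ≤ ℓ^2/2)
    (s : Finset ℤ) (hsG : ∀ j ∈ s, G' j) (a : ℤ → ℂ) :
    ∀ j ∈ s, (ℓ/2) * ‖a j‖ ≤ ∫ t in (-ℓ)..ℓ, ‖P Λ s a t‖ := by
  intro j hj
  obtain ⟨k, hks, hkmax⟩ := Finset.exists_max_image s (fun i => ‖a i‖) ⟨j, hj⟩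
  set J := ∫ t in (-ℓ)..ℓ, ‖P Λ s a t‖ with hJ
  have hext := extraction' Λ s a k hks ℓ hℓ
    (fun i hi hik => fun he => hik (hmono.injective he)) (‖a k‖)
    (fun i hi _ => hkmax i hi)
  have hsum : ∑ i ∈ s.erase k, 1/(Real.pi^2 * (Λ i - Λ k)^2) ≤ 4 / (Real.pi^2 * γ^2) :=
    sum_freq_bound Λ G' γ hγ hgap0 hgapγ k (hsG k hks) s (fun i hi _ => hsG i hi)
  have hsum' : ∑ i ∈ s.erase k, 1/(Real.pi^2 * (Λ i - Λ k)^2) ≤ ℓ^2/2 :=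
    le_trans hsum hcond
  have h2 : ‖a k‖ * ℓ^2 ≤ ℓ * J + ‖a k‖ * (ℓ^2/2) :=
    le_trans hext (by
      apply add_le_add le_rfl
      exact mul_le_mul_of_nonneg_left hsum' (norm_nonneg _))
  have h3 : (ℓ/2) * ‖a k‖ ≤ J := by nlinarith [norm_nonneg (a k)]
  calc (ℓ/2) * ‖a j‖ ≤ (ℓ/2) * ‖a k‖ :=
        mul_le_mul_of_nonneg_left (hkmax j hj) (by positivity)
    _ ≤ J := h3

lemma ee_eq_exp_I (lam t : ℝ) :
    ee lam t = Complex.exp (((2*Real.pi*lam*t : ℝ) : ℂ) * Complex.I) := by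
  rw [ee]; congr 1; push_cast; ring

lemma norm_exp_sub_exp (α β : ℝ) :
    ‖Complex.exp ((α:ℂ) * Complex.I) - Complex.exp ((β:ℂ) * Complex.I)‖
      = 2 * |Real.sin ((α - β)/2)| := by
  have h1 : (α:ℂ) * Complex.I = (((α+β)/2 : ℝ):ℂ) * Complex.I + (((α-β)/2 : ℝ):ℂ) * Complex.I := by
    push_cast; ring
  have h2 : (β:ℂ) * Complex.I = (((α+β)/2 : ℝ):ℂ) * Complex.I + ((-((α-β)/2) : ℝ):ℂ) * Complex.I := by
    push_cast; ring
  rw [h1, h2, Complex.exp_add, Complex.exp_add, ← mul_sub, norm_mul]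
  rw [Complex.norm_exp_ofReal_mul_I, one_mul]
  have h3 : Complex.exp ((((α-β)/2 : ℝ):ℂ) * Complex.I)
      - Complex.exp (((-((α-β)/2) : ℝ):ℂ) * Complex.I)
      = 2 * Complex.sin ((((α-β)/2 : ℝ)):ℂ) * Complex.I := by
    rw [Complex.exp_mul_I, Complex.exp_mul_I]
    rw [show ((-((α-β)/2) : ℝ):ℂ) = -((((α-β)/2 : ℝ)):ℂ) by push_cast; ring]
    rw [Complex.cos_neg, Complex.sin_neg]
    ring
  rw [h3, ← Complex.ofReal_sin]
  rw [norm_mul, norm_mul, Complex.norm_I, mul_one]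
  simp only [Complex.norm_real, Real.norm_eq_abs, Complex.norm_ofNat]

lemma norm_ee_sub_ee (lam lam' h : ℝ) :
    ‖ee lam h - ee lam' h‖ = 2 * |Real.sin (Real.pi * (lam - lam') * h)| := by
  rw [ee_eq_exp_I, ee_eq_exp_I, norm_exp_sub_exp]
  congr 2
  ring

lemma exists_h (δ η mu : ℝ) (hδ : 0 < δ) (hη : 0 < η) (hmu : δ ≤ |mu|) :
    ∃ h : ℝ, 0 ≤ h ∧ h ≤ η ∧ min 1 (2*δ*η) ≤ |Real.sin (Real.pi * mu * h)| := by
  have hm : 0 < |mu| := lt_of_lt_of_le hδ hmu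
  have habs : ∀ h : ℝ, |Real.sin (Real.pi * mu * h)| = |Real.sin (Real.pi * |mu| * h)| := by
    intro h
    rcases abs_cases mu with ⟨he, _⟩ | ⟨he, _⟩
    · rw [he]
    · rw [he]
      rw [show Real.pi * -mu * h = -(Real.pi * mu * h) by ring, Real.sin_neg, abs_neg]
  by_cases hcase : 1/(2*|mu|) ≤ η
  · refine ⟨1/(2*|mu|), by positivity, hcase, ?_⟩
    rw [habs]
    rw [show Real.pi * |mu| * (1/(2*|mu|)) = Real.pi/2 by field_simp]
    rw [Real.sin_pi_div_two]
    simp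
  · push_neg at hcase
    refine ⟨η, hη.le, le_refl _, ?_⟩
    rw [habs]
    have hlt : |mu| * η < 1/2 := by
      have := (lt_div_iff₀ (by positivity : (0:ℝ) < 2 * |mu|)).1 hcase
      nlinarith
    have hx0 : 0 ≤ Real.pi * |mu| * η := by positivity
    have hx2 : Real.pi * |mu| * η ≤ Real.pi/2 := by
      nlinarith [Real.pi_pos]
    have := Real.mul_le_sin hx0 hx2
    have hsin0 : 0 ≤ Real.sin (Real.pi * |mu| * η) := by
      have h0 : (0:ℝ) ≤ 2/Real.pi * (Real.pi * |mu| * η) := by positivity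
      linarith
    rw [abs_of_nonneg hsin0]
    have h2 : 2 * |mu| * η ≤ Real.sin (Real.pi * |mu| * η) := by
      have hpi : (2:ℝ)/Real.pi * (Real.pi * |mu| * η) = 2 * |mu| * η := by
        field_simp
      linarith [this, hpi.le, hpi.ge]
    calc min 1 (2*δ*η) ≤ 2*δ*η := min_le_right _ _
      _ ≤ 2 * |mu| * η := by nlinarith
      _ ≤ Real.sin (Real.pi * |mu| * η) := h2


lemma J_nonneg (Λ : ℤ → ℝ) (s : Finset ℤ) (a : ℤ → ℂ) (x y : ℝ) (hxy : x ≤ y) :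
    0 ≤ ∫ t in x..y, ‖P Λ s a t‖ :=
  intervalIntegral.integral_nonneg hxy (fun u _ => norm_nonneg _)

lemma add_one (Λ : ℤ → ℝ) (hmono : StrictMono Λ)
    (δ : ℝ) (hδ : 0 < δ) (hgapδ : ∀ i : ℤ, δ ≤ Λ (i+1) - Λ i)
    (Q' : Finset ℤ → Prop) (b : ℤ) (hb : ∀ s, Q' s → b ∉ s)
    (c ℓ η : ℝ) (hc : 0 < c) (hℓ : 0 < ℓ) (hη : 0 < η)
    (H : ∀ s, Q' s → ∀ a : ℤ → ℂ, ∀ j ∈ s, c * ‖a j‖ ≤ ∫ t in (-ℓ)..ℓ, ‖P Λ s a t‖) :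
    ∃ c' > 0, ∀ s, Q' s → ∀ a : ℤ → ℂ, ∀ j ∈ insert b s,
      c' * ‖a j‖ ≤ ∫ t in (-(ℓ+η))..(ℓ+η), ‖P Λ (insert b s) a t‖ := by
  have hgap0 : ∀ i : ℤ, 0 ≤ Λ (i+1) - Λ i := fun i => le_trans hδ.le (hgapδ i)
  set ℓ' := ℓ + η with hℓ'def
  have hℓ' : 0 < ℓ' := by rw [hℓ'def]; linarith
  set c₀ := min 1 (2*δ*η) with hc₀def
  have hc₀ : 0 < c₀ := lt_min one_pos (by positivity)
  set c1 := c * c₀ with hc1def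
  have hc1 : 0 < c1 := mul_pos hc hc₀
  set S := 4/(Real.pi^2 * δ^2) with hSdef
  have hS : 0 < S := by rw [hSdef]; positivity
  set E := ℓ' + S/c1 with hEdef
  have hE : 0 < E := by rw [hEdef]; positivity
  refine ⟨min c1 (ℓ'^2/E), lt_min hc1 (by positivity), ?_⟩
  intro s hQ a j hj
  have hbs := hb s hQ
  set J' := ∫ t in (-ℓ')..ℓ', ‖P Λ (insert b s) a t‖ with hJ'def
  have hJnn : 0 ≤ J' := J_nonneg Λ (insert b s) a _ _ (by linarith)
  have claim1 : ∀ i ∈ s, c1 * ‖a i‖ ≤ J' := by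
    intro i hi
    have hib : i ≠ b := fun he => hbs (he ▸ hi)
    have hsep : δ ≤ |Λ i - Λ b| := by
      rcases lt_or_gt_of_ne hib with hlt | hgt
      · have := sep_of_gap Λ hmono δ hgapδ i b hlt
        rw [abs_sub_comm, abs_of_nonneg (by linarith)]
        linarith
      · have := sep_of_gap Λ hmono δ hgapδ b i hgt
        rw [abs_of_nonneg (by linarith)]
        linarith
    obtain ⟨h, hh0, hhη, hsin⟩ := exists_h δ η (Λ i - Λ b) hδ hη hsep
    set a' : ℤ → ℂ := fun i' => a i' * (ee (Λ i') h - ee (Λ b) h) with ha'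
    have hpt : ∀ t : ℝ, P Λ s a' t
        = P Λ (insert b s) a (t+h) - ee (Λ b) h * P Λ (insert b s) a t := by
      intro t
      have expand : P Λ (insert b s) a (t+h) - ee (Λ b) h * P Λ (insert b s) a t
          = (a b * ee (Λ b) (t+h) - ee (Λ b) h * (a b * ee (Λ b) t))
            + ∑ i' ∈ s, (a i' * ee (Λ i') (t+h) - ee (Λ b) h * (a i' * ee (Λ i') t)) := by
        rw [P, P, Finset.sum_insert hbs, Finset.sum_insert hbs, Finset.sum_sub_distrib,
          mul_add, Finset.mul_sum]
        ring
      rw [expand, show (a b * ee (Λ b) (t+h) - ee (Λ b) h * (a b * ee (Λ b) t)) = 0 by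
        rw [ee_add_arg]; ring, zero_add, P]
      apply Finset.sum_congr rfl
      intro i' _
      rw [ha', ee_add_arg]
      ring
    have hHi := H s hQ a' i hi
    have contF : Continuous (P Λ (insert b s) a) := continuous_P _ _ _
    have contFh : Continuous (fun t => P Λ (insert b s) a (t+h)) :=
      contF.comp (continuous_add_right h)
    have h3 : (∫ t in (-ℓ)..ℓ, ‖P Λ (insert b s) a (t+h)‖) ≤ J' := by
      rw [intervalIntegral.integral_comp_add_right (fun t => ‖P Λ (insert b s) a t‖) h]
      apply intervalIntegral.integral_mono_interval (by linarith : -ℓ' ≤ -ℓ + h)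
        (by linarith : -ℓ + h ≤ ℓ + h) (by linarith : ℓ + h ≤ ℓ')
        (Filter.Eventually.of_forall (fun t => norm_nonneg _))
        (contF.norm.intervalIntegrable _ _)
    have h4 : (∫ t in (-ℓ)..ℓ, ‖P Λ (insert b s) a t‖) ≤ J' := by
      apply intervalIntegral.integral_mono_interval (by linarith : -ℓ' ≤ -ℓ)
        (by linarith : -ℓ ≤ ℓ) (by linarith : ℓ ≤ ℓ')
        (Filter.Eventually.of_forall (fun t => norm_nonneg _))
        (contF.norm.intervalIntegrable _ _)
    have hbound : (∫ t in (-ℓ)..ℓ, ‖P Λ s a' t‖) ≤ 2 * J' := by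
      have h1 : (∫ t in (-ℓ)..ℓ, ‖P Λ s a' t‖)
          ≤ ∫ t in (-ℓ)..ℓ, (‖P Λ (insert b s) a (t+h)‖ + ‖P Λ (insert b s) a t‖) := by
        apply intervalIntegral.integral_mono_on (by linarith : -ℓ ≤ ℓ)
          ((continuous_P Λ s a').norm.intervalIntegrable _ _)
          ((contFh.norm.add contF.norm).intervalIntegrable _ _)
        intro t _
        rw [hpt t]
        refine le_trans (norm_sub_le _ _) ?_
        rw [norm_mul, norm_ee, one_mul]
        exact le_rfl
      have h2 : (∫ t in (-ℓ)..ℓ, (‖P Λ (insert b s) a (t+h)‖ + ‖P Λ (insert b s) a t‖))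
          = (∫ t in (-ℓ)..ℓ, ‖P Λ (insert b s) a (t+h)‖)
            + ∫ t in (-ℓ)..ℓ, ‖P Λ (insert b s) a t‖ :=
        intervalIntegral.integral_add (contFh.norm.intervalIntegrable _ _)
          (contF.norm.intervalIntegrable _ _)
      linarith
    have hd : ‖a' i‖ = ‖a i‖ * (2 * |Real.sin (Real.pi * (Λ i - Λ b) * h)|) := by
      rw [ha']
      rw [norm_mul, norm_ee_sub_ee]
    have hge : 2 * (c1 * ‖a i‖) ≤ c * ‖a' i‖ := by
      rw [hd, hc1def]
      have hthis : c₀ ≤ |Real.sin (Real.pi * (Λ i - Λ b) * h)| := by rw [hc₀def]; exact hsin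
      have hmul : (c * ‖a i‖) * c₀ ≤ (c * ‖a i‖) * |Real.sin (Real.pi * (Λ i - Λ b) * h)| :=
        mul_le_mul_of_nonneg_left hthis (by positivity)
      nlinarith [hmul]
    linarith
  rcases Finset.mem_insert.1 hj with hjb | hjs
  · subst hjb
    have hext := extraction' Λ (insert j s) a j (Finset.mem_insert_self j s) ℓ' hℓ'
      (fun i hi hij => fun he => hij (hmono.injective he)) (J'/c1)
      (fun i hi hij => by
        have his : i ∈ s := by
          rcases Finset.mem_insert.1 hi with h | h
          · exact absurd h hij
          · exact h
        have := claim1 i his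
        rw [le_div_iff₀ hc1]
        linarith)
    have hsum : ∑ i ∈ (insert j s).erase j, 1/(Real.pi^2*(Λ i - Λ j)^2) ≤ S := by
      rw [hSdef]
      exact sum_freq_bound Λ (fun _ => True) δ hδ hgap0 (fun i _ => hgapδ i) j trivial
        (insert j s) (fun _ _ _ => trivial)
    have hcomb : ‖a j‖ * ℓ'^2 ≤ ℓ' * J' + (J'/c1) * S := by
      refine le_trans hext (add_le_add le_rfl ?_)
      exact mul_le_mul_of_nonneg_left hsum (by positivity)
    have hgoal : (ℓ'^2/E) * ‖a j‖ ≤ J' := by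
      rw [div_mul_eq_mul_div, div_le_iff₀ hE]
      calc ℓ'^2 * ‖a j‖ = ‖a j‖ * ℓ'^2 := by ring
        _ ≤ ℓ' * J' + (J'/c1) * S := hcomb
        _ = J' * E := by rw [hEdef, mul_add]; ring
    calc (min c1 (ℓ'^2/E)) * ‖a j‖ ≤ (ℓ'^2/E) * ‖a j‖ :=
        mul_le_mul_of_nonneg_right (min_le_right _ _) (norm_nonneg _)
      _ ≤ J' := hgoal
  · calc (min c1 (ℓ'^2/E)) * ‖a j‖ ≤ c1 * ‖a j‖ :=
        mul_le_mul_of_nonneg_right (min_le_left _ _) (norm_nonneg _)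
      _ ≤ J' := claim1 j hjs


lemma multi_add (Λ : ℤ → ℝ) (hmono : StrictMono Λ)
    (δ : ℝ) (hδ : 0 < δ) (hgapδ : ∀ i : ℤ, δ ≤ Λ (i+1) - Λ i)
    (Tail : ℤ → Prop)
    (c₀ ℓ₀ η : ℝ) (hc₀ : 0 < c₀) (hℓ₀ : 0 < ℓ₀) (hη : 0 < η)
    (Hbase : ∀ s : Finset ℤ, (∀ j ∈ s, Tail j) → ∀ a : ℤ → ℂ, ∀ j ∈ s,
      c₀ * ‖a j‖ ≤ ∫ t in (-ℓ₀)..ℓ₀, ‖P Λ s a t‖) :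
    ∀ B : Finset ℤ, ∃ c > (0:ℝ), ∀ s : Finset ℤ, (∀ j ∈ s, Tail j ∨ j ∈ B) →
      ∀ a : ℤ → ℂ, ∀ j ∈ s,
        c * ‖a j‖ ≤ ∫ t in (-(ℓ₀ + η * B.card))..(ℓ₀ + η * B.card), ‖P Λ s a t‖ := by
  intro B
  induction B using Finset.induction_on with
  | empty =>
    refine ⟨c₀, hc₀, ?_⟩
    intro s hs a j hj
    have : ∀ i ∈ s, Tail i := by
      intro i hi
      rcases hs i hi with h | h
      · exact h
      · exact absurd h (Finset.notMem_empty i)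
    simpa using Hbase s this a j hj
  | @insert b B' hbB' ih =>
    obtain ⟨c, hc, Hc⟩ := ih
    have hL : (0:ℝ) < ℓ₀ + η * B'.card := by positivity
    obtain ⟨c', hc', Hc'⟩ := add_one Λ hmono δ hδ hgapδ
      (fun s => (∀ j ∈ s, Tail j ∨ j ∈ B') ∧ b ∉ s) b (fun s hs => hs.2)
      c (ℓ₀ + η * B'.card) η hc hL hη
      (fun s hs a j hj => Hc s hs.1 a j hj)
    refine ⟨min c c', lt_min hc hc', ?_⟩
    intro s hs a j hj
    have hcard : (((insert b B').card : ℕ) : ℝ) = (B'.card : ℝ) + 1 := by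
      rw [Finset.card_insert_of_notMem hbB']; push_cast; ring
    have hIeq : ℓ₀ + η * ((insert b B').card : ℝ) = (ℓ₀ + η * B'.card) + η := by
      rw [hcard]; ring
    by_cases hbs : b ∈ s
    · have hseq : s = insert b (s.erase b) := (Finset.insert_erase hbs).symm
      have hQ : (∀ j' ∈ s.erase b, Tail j' ∨ j' ∈ B') ∧ b ∉ s.erase b := by
        constructor
        · intro j' hj'
          obtain ⟨hne, hjs⟩ := Finset.mem_erase.1 hj'
          rcases hs j' hjs with h | h
          · exact Or.inl h
          · rcases Finset.mem_insert.1 h with h | h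
            · exact absurd h hne
            · exact Or.inr h
        · exact Finset.notMem_erase b s
      have hfin := Hc' (s.erase b) hQ a j (by rw [← hseq]; exact hj)
      rw [← hseq] at hfin
      rw [hIeq]
      calc min c c' * ‖a j‖ ≤ c' * ‖a j‖ :=
          mul_le_mul_of_nonneg_right (min_le_right _ _) (norm_nonneg _)
        _ ≤ _ := hfin
    · have hs' : ∀ j' ∈ s, Tail j' ∨ j' ∈ B' := by
        intro j' hj'
        rcases hs j' hj' with h | h
        · exact Or.inl h
        · rcases Finset.mem_insert.1 h with h | h
          · exact absurd (h ▸ hj') hbs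
          · exact Or.inr h
      have h1 := Hc s hs' a j hj
      have h2 : (∫ t in (-(ℓ₀ + η * B'.card))..(ℓ₀ + η * B'.card), ‖P Λ s a t‖)
          ≤ ∫ t in (-(ℓ₀ + η * ((insert b B').card:ℝ)))..(ℓ₀ + η * ((insert b B').card:ℝ)),
              ‖P Λ s a t‖ := by
        rw [hIeq]
        apply intervalIntegral.integral_mono_interval (by linarith) (by linarith) (by linarith)
          (Filter.Eventually.of_forall (fun t => norm_nonneg _))
          ((continuous_P Λ s a).norm.intervalIntegrable _ _)
      calc min c c' * ‖a j‖ ≤ c * ‖a j‖ :=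
          mul_le_mul_of_nonneg_right (min_le_left _ _) (norm_nonneg _)
        _ ≤ _ := le_trans h1 h2

end IK

open IK in
theorem ingham_kahane_l1_linfty
    (Λ : ℤ → ℝ) (hmono : StrictMono Λ)
    (hgap : Tendsto (fun k : ℤ => Λ (k + 1) - Λ k) (atTop ⊔ atBot) atTop)
    (hsum : Summable (fun k : ℤ => 1 / (1 + |Λ k|)))
    (T : ℝ) (hT : 0 < T) :
    ∃ A > (0 : ℝ), ∀ N : ℕ, 1 ≤ N → ∀ a : ℤ → ℂ, ∀ k : ℤ, |k| ≤ (N : ℤ) →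
      A * ‖a k‖ ≤
        (1 / T) * ∫ t in (-(T / 2))..(T / 2),
          ‖∑ j ∈ Finset.Icc (-(N : ℤ)) (N : ℤ),
            a j * Complex.exp (2 * Real.pi * Complex.I * Λ j * t)‖ := by
  obtain ⟨δ, hδ, hgapδ⟩ : ∃ δ > (0:ℝ), ∀ i : ℤ, δ ≤ Λ (i+1) - Λ i := by
    have h1 : ∀ᶠ i in (atTop ⊔ atBot : Filter ℤ), (1:ℝ) ≤ Λ (i+1) - Λ i :=
      hgap.eventually_ge_atTop 1
    rw [Filter.eventually_sup] at h1
    obtain ⟨h1t, h1b⟩ := h1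
    obtain ⟨K₁, hK₁⟩ := Filter.eventually_atTop.1 h1t
    obtain ⟨K₂, hK₂⟩ := Filter.eventually_atBot.1 h1b
    rcases le_or_gt K₂ K₁ with hK | hK
    · have hne : ((Finset.Icc K₂ K₁).image (fun i => Λ (i+1) - Λ i)).Nonempty :=
        Finset.Nonempty.image ⟨K₂, Finset.mem_Icc.2 ⟨le_refl _, hK⟩⟩ _
      obtain ⟨i0, hi0, he0⟩ := Finset.mem_image.1 (Finset.min'_mem _ hne)
      have hmpos : 0 < ((Finset.Icc K₂ K₁).image (fun i => Λ (i+1) - Λ i)).min' hne := by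
        rw [← he0]
        exact sub_pos.2 (hmono (lt_add_one i0))
      refine ⟨min 1 (((Finset.Icc K₂ K₁).image (fun i => Λ (i+1) - Λ i)).min' hne),
        lt_min one_pos hmpos, ?_⟩
      intro i
      rcases le_or_gt K₁ i with h | h
      · exact le_trans (min_le_left _ _) (hK₁ i h)
      rcases le_or_gt i K₂ with h' | h'
      · exact le_trans (min_le_left _ _) (hK₂ i h')
      · refine le_trans (min_le_right _ _) ?_
        have hmem : Λ (i+1) - Λ i ∈ (Finset.Icc K₂ K₁).image (fun i => Λ (i+1) - Λ i) :=
          Finset.mem_image_of_mem _ (Finset.mem_Icc.2 ⟨by omega, by omega⟩)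
        exact Finset.min'_le _ _ hmem
    · refine ⟨1, one_pos, fun i => ?_⟩
      rcases le_or_gt K₁ i with h | h
      · exact hK₁ i h
      · exact hK₂ i (by omega)
  have hgap0 : ∀ i : ℤ, 0 ≤ Λ (i+1) - Λ i := fun i => le_trans hδ.le (hgapδ i)
  set ℓ₀ := T/8 with hℓ₀def
  have hℓ₀ : 0 < ℓ₀ := by rw [hℓ₀def]; positivity
  set γ := 4/ℓ₀ with hγdef
  have hγ : 0 < γ := by rw [hγdef]; positivity
  have hγℓ : γ * ℓ₀ = 4 := by rw [hγdef]; field_simp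
  have hcond : 4/(Real.pi^2 * γ^2) ≤ ℓ₀^2/2 := by
    rw [div_le_div_iff₀ (by positivity) (by norm_num : (0:ℝ) < 2)]
    have h16 : (γ*ℓ₀)^2 = 16 := by rw [hγℓ]; norm_num
    have hπ9 : (9:ℝ) ≤ Real.pi^2 := by nlinarith [Real.pi_gt_three, Real.pi_pos]
    rw [show ℓ₀^2*(Real.pi^2*γ^2) = Real.pi^2*(γ*ℓ₀)^2 from by ring, h16]
    nlinarith [hπ9]
  have h2 : ∀ᶠ i in (atTop ⊔ atBot : Filter ℤ), γ ≤ Λ (i+1) - Λ i :=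
    hgap.eventually_ge_atTop γ
  rw [Filter.eventually_sup] at h2
  obtain ⟨K₃, hK₃⟩ := Filter.eventually_atTop.1 h2.1
  obtain ⟨K₄, hK₄⟩ := Filter.eventually_atBot.1 h2.2
  set G' : ℤ → Prop := fun i => K₃ ≤ i ∨ i ≤ K₄ with hG'def
  have hgapγ : ∀ i, G' i → γ ≤ Λ (i+1) - Λ i := fun i hi => hi.elim (hK₃ i) (hK₄ i)
  have Hbase : ∀ s : Finset ℤ, (∀ j ∈ s, G' j) → ∀ a : ℤ → ℂ, ∀ j ∈ s,
      (ℓ₀/2) * ‖a j‖ ≤ ∫ t in (-ℓ₀)..ℓ₀, ‖P Λ s a t‖ := by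
    intro s hsG a j hj
    exact core Λ hmono G' γ ℓ₀ hγ hℓ₀ hgap0 hgapγ hcond s hsG a j hj
  set B := Finset.Ioo K₄ K₃ with hBdef
  set η := (T/4)/((B.card:ℝ) + 1) with hηdef
  have hη : 0 < η := by rw [hηdef]; positivity
  obtain ⟨c, hc, Hc⟩ := multi_add Λ hmono δ hδ hgapδ G' (ℓ₀/2) ℓ₀ η
    (by positivity) hℓ₀ hη Hbase B
  have hcardnn : (0:ℝ) ≤ (B.card:ℝ) := Nat.cast_nonneg _
  have hL2 : ℓ₀ + η * B.card ≤ T/2 := by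
    have hb : η * B.card ≤ T/4 := by
      rw [hηdef, div_mul_eq_mul_div, div_le_iff₀ (by positivity)]
      nlinarith
    rw [hℓ₀def]; linarith
  have hLpos : (0:ℝ) < ℓ₀ + η * B.card := by positivity
  refine ⟨c/T, by positivity, ?_⟩
  intro N hN a k hk
  set s := Finset.Icc (-(N:ℤ)) (N:ℤ) with hsdef
  have hks : k ∈ s := by
    rw [hsdef, Finset.mem_Icc]
    exact ⟨(abs_le.1 hk).1, (abs_le.1 hk).2⟩
  have hcover : ∀ j ∈ s, G' j ∨ j ∈ B := by
    intro j _
    by_cases h : G' j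
    · exact Or.inl h
    · right
      rw [hBdef, Finset.mem_Ioo]
      rw [hG'def] at h
      push_neg at h
      omega
  have h1 := Hc s hcover a k hks
  have h2 : (∫ t in (-(ℓ₀ + η * B.card))..(ℓ₀ + η * B.card), ‖P Λ s a t‖)
      ≤ ∫ t in (-(T/2))..(T/2), ‖P Λ s a t‖ := by
    apply intervalIntegral.integral_mono_interval (by linarith) (by linarith) (by linarith)
      (Filter.Eventually.of_forall (fun t => norm_nonneg _))
      ((continuous_P Λ s a).norm.intervalIntegrable _ _)
  have h3 : c * ‖a k‖ ≤ ∫ t in (-(T/2))..(T/2), ‖P Λ s a t‖ := le_trans h1 h2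
  have hfin : (c/T) * ‖a k‖ ≤ (1/T) * ∫ t in (-(T/2))..(T/2), ‖P Λ s a t‖ := by
    rw [div_mul_eq_mul_div, one_div, ← div_eq_inv_mul]
    exact (div_le_div_iff_of_pos_right hT).2 h3
  exact hfin
end
end

section
/- Let P(X) = a_n X^n + ⋯ + a_1 X + a_0 be a real polynomial with n ≥ 2 and a_n > 0, let Q(k,m) = ∑_{ℓ=1}^{n} a_ℓ ∑_{j=0}^{ℓ−1} k^{ℓ−1−j} m^{j}, and let E = {Q(k,m) : k, m ∈ ℤ, k ≠ m}. Fix a ∈ E, t_0 ∈ ℝ, and x_0 ∈ ℝ. Then there exists a finitely supported sequence of complex numbers (c_k)_{k∈ℤ}, not all zero (in fact supported on two indices k ≠ m with Q(k,m) = a), such that the function u(t,x) = ∑_{k∈ℤ} c_k e^{−2πi P(k) t} e^{2πi k x} satisfies u(t_0 + t, x_0 + a t) = 0 for all t ∈ ℝ. -/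
open Real MeasureTheory Filter Finset Function

theorem general_schrodinger_no_observability
    (n : ℕ) (hn : 2 ≤ n) (coef : ℕ → ℝ) (hlead : 0 < coef n)
    (P : ℝ → ℝ) (hP : P = fun x => ∑ i ∈ Finset.range (n + 1), coef i * x ^ i)
    (Q : ℤ → ℤ → ℝ)
    (hQ : Q = fun (k m : ℤ) => ∑ ℓ ∈ Finset.Icc 1 n, coef ℓ *
      ∑ j ∈ Finset.range ℓ, (k : ℝ) ^ (ℓ - 1 - j) * (m : ℝ) ^ j)
    (a : ℝ) (ha : a ∈ {x : ℝ | ∃ k m : ℤ, k ≠ m ∧ Q k m = x})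
    (t₀ x₀ : ℝ) :
    ∃ k m : ℤ, k ≠ m ∧ Q k m = a ∧
      ∃ c : ℤ → ℂ, Function.support c ⊆ {k, m} ∧ c ≠ 0 ∧
        ∀ t : ℝ,
          (∑' j : ℤ, c j *
            Complex.exp (-(2 * Real.pi * Complex.I) * P (j : ℝ) * (t₀ + t)) *
            Complex.exp (2 * Real.pi * Complex.I * (j : ℝ) * (x₀ + a * t))) = 0 := by
  obtain ⟨k, m, hkm, hQa⟩ := ha
  -- key polynomial identity : P k - P m = (k - m) * Q k m
  have hPQ : P (k : ℝ) - P (m : ℝ) = ((k : ℝ) - (m : ℝ)) * Q k m := by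
    subst hP hQ
    simp only
    rw [Finset.mul_sum, ← Finset.sum_sub_distrib]
    rw [show Finset.range (n + 1) = insert 0 (Finset.Icc 1 n) by
      ext x; simp [Nat.lt_succ_iff]; omega]
    rw [Finset.sum_insert (by simp)]
    simp only [pow_zero, mul_one, sub_self, zero_add]
    refine Finset.sum_congr rfl fun ℓ _ => ?_
    have hg : ((k : ℝ) ^ ℓ - (m : ℝ) ^ ℓ)
        = ((k : ℝ) - (m : ℝ)) * ∑ j ∈ Finset.range ℓ, (k : ℝ) ^ (ℓ - 1 - j) * (m : ℝ) ^ j := by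
      have h1 : ∑ j ∈ Finset.range ℓ, (k : ℝ) ^ (ℓ - 1 - j) * (m : ℝ) ^ j
          = ∑ j ∈ Finset.range ℓ, (k : ℝ) ^ j * (m : ℝ) ^ (ℓ - 1 - j) := by
        rw [← Finset.sum_range_reflect]
        refine Finset.sum_congr rfl fun j hj => ?_
        rw [Finset.mem_range] at hj
        congr 2 <;> omega
      rw [h1, ← geom_sum₂_mul, mul_comm]
    linear_combination coef ℓ * hg
  have hPa : P (k : ℝ) = P (m : ℝ) + ((k : ℝ) - (m : ℝ)) * a := by
    rw [← hQa]; linarith [hPQ]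
  have hPaC : (P (k : ℝ) : ℂ) = (P (m : ℝ) : ℂ) + ((k : ℂ) - (m : ℂ)) * (a : ℂ) := by
    exact_mod_cast hPa
  refine ⟨k, m, hkm, hQa,
    fun j => if j = k then 1 else if j = m then
      -Complex.exp (2 * Real.pi * Complex.I * ((k : ℂ) - (m : ℂ)) * ((x₀ : ℂ) - (a : ℂ) * (t₀ : ℂ)))
      else 0, ?_, ?_, ?_⟩
  · intro j hj
    simp only [Function.mem_support] at hj
    by_cases h1 : j = k
    · simp [h1]
    by_cases h2 : j = m
    · simp [h2]
    simp [h1, h2] at hj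
  · intro h
    have := congrFun h k
    simp at this
  · intro t
    have hzero : ∀ j : ℤ, j ∉ ({k, m} : Finset ℤ) →
        ((if j = k then (1 : ℂ) else if j = m then
          -Complex.exp (2 * Real.pi * Complex.I * ((k : ℂ) - (m : ℂ)) * ((x₀ : ℂ) - (a : ℂ) * (t₀ : ℂ)))
          else 0) *
          Complex.exp (-(2 * Real.pi * Complex.I) * P (j : ℝ) * (t₀ + t)) *
          Complex.exp (2 * Real.pi * Complex.I * (j : ℝ) * (x₀ + a * t))) = 0 := by
      intro j hj
      simp only [Finset.mem_insert, Finset.mem_singleton, not_or] at hj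
      simp [hj.1, hj.2]
    rw [tsum_eq_sum hzero, Finset.sum_pair hkm]
    simp only [if_pos rfl, if_neg hkm, if_neg (Ne.symm hkm), if_true]
    have key : Complex.exp (-(2 * Real.pi * Complex.I) * P (k : ℝ) * (t₀ + t)) *
        Complex.exp (2 * Real.pi * Complex.I * (k : ℝ) * (x₀ + a * t))
        = Complex.exp (2 * Real.pi * Complex.I * ((k : ℂ) - (m : ℂ)) * ((x₀ : ℂ) - (a : ℂ) * (t₀ : ℂ))) *
          (Complex.exp (-(2 * Real.pi * Complex.I) * P (m : ℝ) * (t₀ + t)) *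
           Complex.exp (2 * Real.pi * Complex.I * (m : ℝ) * (x₀ + a * t))) := by
      rw [← Complex.exp_add, ← Complex.exp_add, ← Complex.exp_add]
      congr 1
      push_cast
      linear_combination (-(2 * (Real.pi : ℂ) * Complex.I) * ((t₀ : ℂ) + (t : ℂ))) * hPaC
    linear_combination key
end

section
/- Fix a ∈ ℝ, t_0 ∈ ℝ, x_0 ∈ ℝ, and T > 0. There exists a constant D > 0 (depending only on a and T) such that for every sequence of complex numbers (c_k)_{k∈ℤ} with ∑_{k∈ℤ} (1+|k|²)² |c_k|² < ∞, the function u(t,x) = ∑_{k∈ℤ} c_k e^{2πi(k² t + k x)} satisfies ∫_0^T |u(t_0 + t, x_0 + a t)|² dt ≤ D ∑_{k∈ℤ} |c_k|². -/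
open Real MeasureTheory Filter
noncomputable def SchrAux.ee (r : ℝ) : ℂ := Complex.exp (r * Complex.I)
namespace SchrAux
lemma ee_norm (r : ℝ) : ‖ee r‖ = 1 := by
  simp [ee, Complex.norm_exp]
lemma ee_mul (r s : ℝ) : ee r * ee s = ee (r + s) := by
  rw [ee, ee, ee, ← Complex.exp_add]; congr 1; push_cast; ring
lemma ee_conj (r : ℝ) : (starRingEnd ℂ) (ee r) = ee (-r) := by
  rw [ee, ee, ← Complex.exp_conj]; congr 1
  simp [map_mul, Complex.conj_I, Complex.conj_ofReal]
lemma ee_continuous : Continuous ee := by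
  unfold ee; exact Complex.continuous_exp.comp (by continuity)
lemma ee_zero : ee 0 = 1 := by simp [ee]
end SchrAux
namespace SchrAux
lemma osc_le_T (T θ : ℝ) (hT : 0 ≤ T) : ‖∫ t in (0:ℝ)..T, ee (2*π*θ*t)‖ ≤ T := by
  have := intervalIntegral.norm_integral_le_of_norm_le_const
    (C := 1) (f := fun t => ee (2*π*θ*t)) (a := (0:ℝ)) (b := T)
    (fun x _ => by rw [ee_norm])
  simpa [abs_of_nonneg hT] using this

lemma osc_le_inv (T θ : ℝ) (hθ : θ ≠ 0) :
    ‖∫ t in (0:ℝ)..T, ee (2*π*θ*t)‖ ≤ 1/(π*|θ|) := by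
  have hrw : ∀ t : ℝ, ee (2*π*θ*t) = Complex.exp ((((2*π*θ : ℝ) : ℂ) * Complex.I) * t) := by
    intro t; rw [ee]; congr 1; push_cast; ring
  have hc : (((2*π*θ : ℝ) : ℂ) * Complex.I) ≠ 0 := by
    simp [Complex.ext_iff, pi_ne_zero, hθ]
  rw [intervalIntegral.integral_congr (fun t _ => hrw t), integral_exp_mul_complex hc]
  have hnorm : ∀ s : ℝ, ‖Complex.exp ((((2*π*θ : ℝ) : ℂ) * Complex.I) * s)‖ = 1 := by
    intro s
    simp [Complex.norm_exp]
  have hcn : ‖(((2*π*θ : ℝ) : ℂ) * Complex.I)‖ = 2*π*|θ| := by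
    rw [norm_mul, Complex.norm_I, mul_one, Complex.norm_real, Real.norm_eq_abs,
      abs_mul, abs_mul, abs_two, abs_of_nonneg pi_nonneg]
  rw [norm_div, hcn]
  have h2 : ‖Complex.exp (↑(2 * π * θ) * Complex.I * ↑T) - Complex.exp (↑(2 * π * θ) * Complex.I * ((0:ℝ):ℂ))‖ ≤ 2 := by
    calc _ ≤ ‖Complex.exp (↑(2 * π * θ) * Complex.I * ↑T)‖ + ‖Complex.exp (↑(2 * π * θ) * Complex.I * ((0:ℝ):ℂ))‖ := norm_sub_le _ _
    _ ≤ 2 := by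
        rw [hnorm T]; norm_num [mul_zero, Complex.exp_zero]
  have hpos : 0 < 2*π*|θ| := by positivity
  calc _ ≤ 2 / (2*π*|θ|) := by gcongr
  _ = 1/(π*|θ|) := by rw [div_eq_div_iff hpos.ne' (by positivity : (π*|θ|) ≠ 0)]; ring
end SchrAux
namespace SchrAux
noncomputable def Ff (T : ℝ) (x : ℝ) : ℝ := if x = 0 then T else min T (1/(2*π*x^2))

lemma Ff_nonneg {T : ℝ} (hT : 0 < T) (x : ℝ) : 0 ≤ Ff T x := by
  unfold Ff; split
  · exact hT.le
  · exact le_min hT.le (by positivity)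

lemma Ff_le_T {T : ℝ} (hT : 0 < T) (x : ℝ) : Ff T x ≤ T := by
  unfold Ff; split
  · exact le_rfl
  · exact min_le_left _ _

lemma Ff_zero {T : ℝ} : Ff T 0 = T := by simp [Ff]

lemma Ff_even {T : ℝ} (x : ℝ) : Ff T (-x) = Ff T x := by
  simp [Ff, neg_eq_zero]

lemma min_add_min (T A B : ℝ) (hT : 0 ≤ T) (hA : 0 ≤ A) (hB : 0 ≤ B) :
    min T (A + B) ≤ min T A + min T B := by
  rcases le_total (A+B) T with h|h
  · rw [min_eq_right h, min_eq_right (le_trans (le_add_of_nonneg_right hB) h),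
      min_eq_right (le_trans (le_add_of_nonneg_left hA) h)]
  · rw [min_eq_left h]
    rcases le_total A T with hA'|hA'
    · rcases le_total B T with hB'|hB'
      · rw [min_eq_right hA', min_eq_right hB']; exact h
      · rw [min_eq_left hB']; exact le_add_of_nonneg_left (le_min hT hA)
    · rw [min_eq_left hA']; exact le_add_of_nonneg_right (le_min hT hB)

lemma le_Ff_add {T : ℝ} (hT : 0 < T) {r : ℝ} (x y : ℝ) (h1 : r ≤ T)
    (h2 : x ≠ 0 → y ≠ 0 → r ≤ 1/(π*(|x| * |y|))) : r ≤ Ff T x + Ff T y := by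
  rcases eq_or_ne x 0 with hx | hx
  · subst hx; rw [Ff_zero]; exact le_add_of_le_of_nonneg h1 (Ff_nonneg hT y)
  rcases eq_or_ne y 0 with hy | hy
  · subst hy; rw [Ff_zero]
    calc r ≤ T := h1
    _ ≤ Ff T x + T := le_add_of_nonneg_left (Ff_nonneg hT x)
  have hxp : 0 < |x| := abs_pos.mpr hx
  have hyp : 0 < |y| := abs_pos.mpr hy
  have hamgm : 1/(π*(|x| * |y|)) ≤ 1/(2*π*x^2) + 1/(2*π*y^2) := by
    have h2xy : 2*(|x| * |y|) ≤ x^2 + y^2 := by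
      nlinarith [sq_nonneg (|x|-|y|), sq_abs x, sq_abs y]
    rw [div_add_div _ _ (by positivity) (by positivity),
      div_le_div_iff₀ (by positivity) (by positivity)]
    have key : 2*π^2*(|x| * |y|) * (2*(|x| * |y|)) ≤ 2*π^2*(|x| * |y|) * (x^2+y^2) :=
      mul_le_mul_of_nonneg_left h2xy (by positivity)
    have habs : (|x| * |y|) * (|x| * |y|) = x^2 * y^2 := by
      rw [show (|x| * |y|) * (|x| * |y|) = (|x| * |x|) * (|y| * |y|) by ring,
        abs_mul_abs_self, abs_mul_abs_self]; ring
    nlinarith [key, habs]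
  have : r ≤ min T (1/(2*π*x^2) + 1/(2*π*y^2)) := le_min h1 ((h2 hx hy).trans hamgm)
  calc r ≤ min T (1/(2*π*x^2) + 1/(2*π*y^2)) := this
  _ ≤ min T (1/(2*π*x^2)) + min T (1/(2*π*y^2)) :=
      min_add_min _ _ _ hT.le (by positivity) (by positivity)
  _ = Ff T x + Ff T y := by rw [Ff, Ff, if_neg hx, if_neg hy]
end SchrAux
namespace SchrAux
lemma summable_ite (n₀ : ℤ) (C : ℝ) : Summable (fun m : ℤ => if m = n₀ then C else 0) :=
  (hasSum_ite_eq n₀ C).summable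

lemma summable_inv_sq : Summable (fun m : ℤ => 1/(m:ℝ)^2) :=
  summable_one_div_int_pow.mpr one_lt_two

set_option maxHeartbeats 1000000 in
lemma summable_Ff {T : ℝ} (hT : 0 < T) : Summable (fun m : ℤ => Ff T (m:ℝ)) := by
  apply Summable.of_nonneg_of_le (fun m => Ff_nonneg hT _)
    (f := fun m : ℤ => (if m = 0 then T else 0) + (1/(2*π)) * (1/(m:ℝ)^2))
  · intro m
    by_cases hm : m = 0
    · subst hm; simp [Ff_zero]
    · have hm' : (m:ℝ) ≠ 0 := Int.cast_ne_zero.mpr hm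
      rw [Ff, if_neg hm', if_neg hm, zero_add]
      refine (min_le_right _ _).trans (le_of_eq ?_)
      rw [div_mul_div_comm, one_mul]
  · exact (summable_ite 0 T).add (summable_inv_sq.mul_left _)

set_option maxHeartbeats 1000000 in
lemma summable_Ff_shift {T : ℝ} (hT : 0 < T) (a : ℝ) :
    Summable (fun m : ℤ => Ff T ((m:ℝ)+a)) := by
  set n₀ : ℤ := round (-a) with hn₀
  have hsub : Summable (fun m : ℤ => 1/((m - n₀ : ℤ):ℝ)^2) :=
    summable_inv_sq.comp_injective (sub_left_injective)
  apply Summable.of_nonneg_of_le (fun m => Ff_nonneg hT _)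
    (f := fun m : ℤ => (if m = n₀ then T else 0) + (2/π) * (1/((m - n₀ : ℤ):ℝ)^2))
  · intro m
    by_cases hm : m = n₀
    · refine le_add_of_le_of_nonneg ?_ (by positivity)
      rw [if_pos hm]; exact Ff_le_T hT _
    · rw [if_neg hm, zero_add]
      have hd : ((m - n₀ : ℤ):ℝ) ≠ 0 := Int.cast_ne_zero.mpr (sub_ne_zero.mpr hm)
      have hd1 : (1:ℝ) ≤ |((m - n₀ : ℤ):ℝ)| := by
        rw [← Int.cast_abs]
        exact_mod_cast Int.one_le_abs (sub_ne_zero.mpr hm)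
      have hround : |(-a) - (n₀:ℝ)| ≤ 1/2 := by
        rw [hn₀]; exact abs_sub_round (-a)
      have hx : |((m - n₀ : ℤ):ℝ)| / 2 ≤ |(m:ℝ) + a| := by
        have h1 : |((m - n₀ : ℤ):ℝ)| - |(-a) - (n₀:ℝ)| ≤ |(m:ℝ) + a| := by
          have := abs_sub_abs_le_abs_sub (((m - n₀ : ℤ):ℝ)) ((-a) - (n₀:ℝ))
          have heq : ((m - n₀ : ℤ):ℝ) - ((-a) - (n₀:ℝ)) = (m:ℝ) + a := by push_cast; ring
          rw [heq] at this
          exact this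
        linarith
      have hne : (m:ℝ) + a ≠ 0 := by
        intro h
        rw [h, abs_zero] at hx
        linarith
      rw [Ff, if_neg hne]
      refine (min_le_right _ _).trans ?_
      have hd2 : ((m - n₀ : ℤ):ℝ)^2 ≤ 4 * ((m:ℝ)+a)^2 := by
        have h1 : |((m - n₀ : ℤ):ℝ)| ≤ 2 * |(m:ℝ)+a| := by linarith
        calc ((m - n₀ : ℤ):ℝ)^2 = |((m - n₀ : ℤ):ℝ)|^2 := (sq_abs _).symm
        _ ≤ (2 * |(m:ℝ)+a|)^2 := by
            apply pow_le_pow_left₀ (abs_nonneg _) h1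
        _ = 4 * ((m:ℝ)+a)^2 := by rw [mul_pow, sq_abs]; ring
      rw [show (2/π) * (1/((m - n₀ : ℤ):ℝ)^2) = 2/(π*((m - n₀ : ℤ):ℝ)^2) by
        rw [div_mul_div_comm, mul_one]]
      rw [div_le_div_iff₀ (by positivity) (by positivity)]
      nlinarith [pi_pos]
  · exact (summable_ite n₀ T).add (hsub.mul_left _)
end SchrAux
namespace SchrAux
set_option maxHeartbeats 1000000 in
lemma hasSum_row1 {T : ℝ} (hT : 0 < T) (k : ℤ) :
    HasSum (fun l : ℤ => Ff T ((k:ℝ) - (l:ℝ))) (∑' m : ℤ, Ff T (m:ℝ)) := by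
  have heq : (fun l : ℤ => Ff T ((k:ℝ) - (l:ℝ)))
      = (fun m : ℤ => Ff T (m:ℝ)) ∘ (Equiv.subLeft k) := by
    funext l
    simp only [Function.comp_apply, Equiv.subLeft_apply]
    rw [show ((k:ℝ) - (l:ℝ)) = ((k - l : ℤ) : ℝ) by push_cast; ring]
  rw [heq, Equiv.hasSum_iff]
  exact (summable_Ff hT).hasSum

set_option maxHeartbeats 1000000 in
lemma hasSum_row2 {T : ℝ} (hT : 0 < T) (a : ℝ) (k : ℤ) :
    HasSum (fun l : ℤ => Ff T ((k:ℝ) + (l:ℝ) + a)) (∑' m : ℤ, Ff T ((m:ℝ)+a)) := by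
  have heq : (fun l : ℤ => Ff T ((k:ℝ) + (l:ℝ) + a))
      = (fun m : ℤ => Ff T ((m:ℝ) + a)) ∘ (Equiv.addLeft k) := by
    funext l
    simp only [Function.comp_apply, Equiv.coe_addLeft]
    rw [show ((k:ℝ) + (l:ℝ) + a) = ((k + l : ℤ) : ℝ) + a by push_cast; ring]
  rw [heq, Equiv.hasSum_iff]
  exact (summable_Ff_shift hT a).hasSum

set_option maxHeartbeats 1000000 in
lemma piece (w : ℤ → ℝ) (hw : Summable w) (g : ℤ → ℤ → ℝ) (C : ℝ)
    (hgnn : ∀ k l, 0 ≤ g k l) (hwnn : ∀ k, 0 ≤ w k) (hg : ∀ k, HasSum (g k) C) :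
    Summable (fun p : ℤ×ℤ => w p.1 * g p.1 p.2) ∧
      ∑' p : ℤ×ℤ, w p.1 * g p.1 p.2 = C * ∑' k, w k := by
  have hnn : (0 : (ℤ×ℤ) → ℝ) ≤ (fun p : ℤ×ℤ => w p.1 * g p.1 p.2) :=
    fun p => mul_nonneg (hwnn _) (hgnn _ _)
  have h1 : ∀ k, Summable fun l => w k * g k l := fun k => ((hg k).summable.mul_left _)
  have h2 : Summable fun k => ∑' l, w k * g k l := by
    apply Summable.congr (hw.mul_right C)
    intro k
    rw [tsum_mul_left, (hg k).tsum_eq]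
  have hsum : Summable (fun p : ℤ×ℤ => w p.1 * g p.1 p.2) :=
    (summable_prod_of_nonneg hnn).mpr ⟨h1, h2⟩
  refine ⟨hsum, ?_⟩
  rw [Summable.tsum_prod' hsum h1]
  calc ∑' (k : ℤ), ∑' (l : ℤ), w k * g k l = ∑' (k : ℤ), w k * C := by
        apply tsum_congr; intro k; rw [tsum_mul_left, (hg k).tsum_eq]
  _ = C * ∑' k, w k := by rw [tsum_mul_right, mul_comm]
end SchrAux
open SchrAux

set_option maxHeartbeats 4000000 in
theorem schrodinger_l2_upper_bound
    (a : ℝ) (t₀ x₀ : ℝ) (T : ℝ) (hT : 0 < T) :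
    ∃ D > (0 : ℝ), ∀ c : ℤ → ℂ,
      Summable (fun k : ℤ => (1 + (k : ℝ) ^ 2) ^ 2 * ‖c k‖ ^ 2) →
      (∫ t in (0 : ℝ)..T,
          ‖∑' k : ℤ, c k *
            Complex.exp (2 * Real.pi * Complex.I *
              ((k : ℝ) ^ 2 * (t₀ + t) + (k : ℝ) * (x₀ + a * t)))‖ ^ 2) ≤
        D * ∑' k : ℤ, ‖c k‖ ^ 2 := by
  classical
  set C₁ : ℝ := ∑' m : ℤ, Ff T (m:ℝ) with hC₁def
  set C₂ : ℝ := ∑' m : ℤ, Ff T ((m:ℝ) + a) with hC₂def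
  have hC₁nn : 0 ≤ C₁ := tsum_nonneg (fun m => Ff_nonneg hT _)
  have hC₂nn : 0 ≤ C₂ := tsum_nonneg (fun m => Ff_nonneg hT _)
  refine ⟨C₁ + C₂ + 1, by linarith, ?_⟩
  intro c hc
  -- notation
  set φ : ℤ → ℝ → ℝ := fun k t => 2*π*((k:ℝ)^2*(t₀+t)+(k:ℝ)*(x₀+a*t)) with hφdef
  set Λ : ℤ → ℝ := fun k => (k:ℝ)^2 + a*(k:ℝ) with hΛdef
  set ψ : ℤ → ℤ → ℝ := fun k l => 2*π*(((k:ℝ)^2-(l:ℝ)^2)*t₀ + ((k:ℝ)-(l:ℝ))*x₀) with hψdef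
  have hE : ∀ (k : ℤ) (t : ℝ), Complex.exp (2 * Real.pi * Complex.I *
      ((k : ℝ) ^ 2 * (t₀ + t) + (k : ℝ) * (x₀ + a * t))) = ee (φ k t) := by
    intro k t; rw [ee, hφdef]; congr 1; push_cast; ring
  simp only [hE]
  set u : ℝ → ℂ := fun t => ∑' k : ℤ, c k * ee (φ k t) with hudef
  set s : ℤ → ℝ := fun k => ‖c k‖ with hsdef
  -- basic summability
  have hs2 : Summable (fun k : ℤ => s k ^ 2) := by
    apply Summable.of_nonneg_of_le (fun k => by positivity) (fun k => ?_) hc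
    have h1 : (1:ℝ) ≤ (1 + (k:ℝ)^2)^2 := by nlinarith [sq_nonneg (k:ℝ)]
    nlinarith [sq_nonneg (s k)]
  have hinv : Summable (fun k : ℤ => (1/(1+(k:ℝ)^2))^2) := by
    apply Summable.of_nonneg_of_le (fun k => by positivity) (fun k => ?_)
      ((summable_ite 0 1).add summable_inv_sq)
    by_cases hk : k = 0
    · subst hk; norm_num
    · have hk' : (1:ℝ) ≤ (k:ℝ)^2 := by
        have : (1:ℝ) ≤ |(k:ℝ)| := by
          rw [← Int.cast_abs]; exact_mod_cast Int.one_le_abs hk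
        nlinarith [sq_abs (k:ℝ)]
      rw [if_neg hk, zero_add]
      rw [div_pow, one_pow, div_le_div_iff₀ (by positivity) (by positivity)]
      nlinarith
  have hs1 : Summable s := by
    apply Summable.of_nonneg_of_le (fun k => norm_nonneg _) (fun k => ?_)
      ((hc.add hinv).mul_left (1/2))
    show s k ≤ 1/2 * ((1+(k:ℝ)^2)^2 * s k^2 + (1/(1+(k:ℝ)^2))^2)
    have key : s k = ((1+(k:ℝ)^2) * s k) * (1/(1+(k:ℝ)^2)) := by
      field_simp
    have h2 := two_mul_le_add_sq ((1+(k:ℝ)^2) * s k) (1/(1+(k:ℝ)^2))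
    calc s k = (1+(k:ℝ)^2) * s k * (1/(1+(k:ℝ)^2)) := key
    _ ≤ 1/2 * (((1+(k:ℝ)^2) * s k)^2 + (1/(1+(k:ℝ)^2))^2) := by nlinarith
    _ = 1/2 * ((1+(k:ℝ)^2)^2 * s k^2 + (1/(1+(k:ℝ)^2))^2) := by ring
  -- continuity of u
  have hnorm_term : ∀ (k : ℤ) (t : ℝ), ‖c k * ee (φ k t)‖ = s k := by
    intro k t; rw [norm_mul, ee_norm, mul_one, hsdef]
  have hu_cont : Continuous u := by
    apply continuous_tsum (f := fun (k : ℤ) (t : ℝ) => c k * ee (φ k t))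
      (fun k => (continuous_const.mul (ee_continuous.comp (by fun_prop)))) hs1
    intro k t; exact (hnorm_term k t).le
  -- pointwise product splitting
  have hsplit : ∀ (k l : ℤ) (t : ℝ),
      (c k * ee (φ k t)) * (starRingEnd ℂ) (c l * ee (φ l t)) =
        (c k * (starRingEnd ℂ) (c l) * ee (ψ k l)) * ee (2*π*(Λ k - Λ l)*t) := by
    intro k l t
    have h1 : (c k * ee (φ k t)) * (starRingEnd ℂ) (c l * ee (φ l t)) =
        (c k * (starRingEnd ℂ) (c l)) * ee (φ k t + -(φ l t)) := by
      rw [map_mul, ee_conj, ← ee_mul]; ring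
    have h2 : (c k * (starRingEnd ℂ) (c l) * ee (ψ k l)) * ee (2*π*(Λ k - Λ l)*t) =
        (c k * (starRingEnd ℂ) (c l)) * ee (ψ k l + 2*π*(Λ k - Λ l)*t) := by
      rw [← ee_mul]; ring
    rw [h1, h2]
    congr 1
    simp only [hφdef, hψdef, hΛdef]
    ring
  have hg1 : ∀ k : ℤ, HasSum (fun l : ℤ => Ff T ((k:ℝ) - (l:ℝ))) C₁ := fun k => hasSum_row1 hT k
  have hg2 : ∀ k : ℤ, HasSum (fun l : ℤ => Ff T ((k:ℝ) + (l:ℝ) + a)) C₂ := fun k => hasSum_row2 hT a k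
  have hcont_term : ∀ k : ℤ, Continuous (fun t : ℝ => c k * ee (φ k t)) :=
    fun k => continuous_const.mul (ee_continuous.comp (by fun_prop))
  have hcont_pair : ∀ p : ℤ × ℤ, Continuous (fun t : ℝ =>
      (c p.1 * ee (φ p.1 t)) * (starRingEnd ℂ) (c p.2 * ee (φ p.2 t))) :=
    fun p => (hcont_term p.1).mul (continuous_star.comp (hcont_term p.2))
  have hnorm_pair : ∀ (p : ℤ × ℤ) (t : ℝ),
      ‖(c p.1 * ee (φ p.1 t)) * (starRingEnd ℂ) (c p.2 * ee (φ p.2 t))‖ = s p.1 * s p.2 := by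
    intro p t
    rw [norm_mul, RCLike.norm_conj, hnorm_term, hnorm_term]
  set I : ℤ × ℤ → ℂ := fun p =>
    ∫ t in Set.Ioc (0:ℝ) T, (c p.1 * ee (φ p.1 t)) * (starRingEnd ℂ) (c p.2 * ee (φ p.2 t)) with hIdef
  have hI_eq : ∀ p : ℤ × ℤ, I p = (c p.1 * (starRingEnd ℂ) (c p.2) * ee (ψ p.1 p.2)) *
      ∫ t in Set.Ioc (0:ℝ) T, ee (2*π*(Λ p.1 - Λ p.2)*t) := by
    intro p
    rw [hIdef]
    simp only [hsplit]
    rw [MeasureTheory.integral_const_mul]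
  have hJ_bound : ∀ p : ℤ × ℤ,
      ‖∫ t in Set.Ioc (0:ℝ) T, ee (2*π*(Λ p.1 - Λ p.2)*t)‖ ≤
        Ff T ((p.1:ℝ) - (p.2:ℝ)) + Ff T ((p.1:ℝ) + (p.2:ℝ) + a) := by
    intro p
    rw [← intervalIntegral.integral_of_le hT.le]
    have hfact : Λ p.1 - Λ p.2 = ((p.1:ℝ) - (p.2:ℝ)) * ((p.1:ℝ) + (p.2:ℝ) + a) := by
      simp only [hΛdef]; push_cast; ring
    apply le_Ff_add hT _ _ (osc_le_T T _ hT.le)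
    intro hx hy
    have hθ : Λ p.1 - Λ p.2 ≠ 0 := by rw [hfact]; exact mul_ne_zero hx hy
    calc ‖∫ t in (0:ℝ)..T, ee (2*π*(Λ p.1 - Λ p.2)*t)‖
        ≤ 1/(π*|Λ p.1 - Λ p.2|) := osc_le_inv T _ hθ
    _ = 1/(π*(|(p.1:ℝ) - (p.2:ℝ)| * |(p.1:ℝ) + (p.2:ℝ) + a|)) := by rw [hfact, abs_mul]
  have hI_norm : ∀ p : ℤ × ℤ, ‖I p‖ ≤
      s p.1 * s p.2 * (Ff T ((p.1:ℝ) - (p.2:ℝ)) + Ff T ((p.1:ℝ) + (p.2:ℝ) + a)) := by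
    intro p
    rw [hI_eq p, norm_mul]
    have h1 : ‖c p.1 * (starRingEnd ℂ) (c p.2) * ee (ψ p.1 p.2)‖ = s p.1 * s p.2 := by
      rw [norm_mul, norm_mul, RCLike.norm_conj, ee_norm, mul_one]
    rw [h1]
    exact mul_le_mul_of_nonneg_left (hJ_bound p) (mul_nonneg (norm_nonneg _) (norm_nonneg _))
  have hss : Summable (fun p : ℤ × ℤ => s p.1 * s p.2) :=
    hs1.mul_of_nonneg hs1 (fun k => norm_nonneg _) (fun k => norm_nonneg _)
  have hFF_nn : ∀ p : ℤ × ℤ, 0 ≤ Ff T ((p.1:ℝ) - (p.2:ℝ)) + Ff T ((p.1:ℝ) + (p.2:ℝ) + a) :=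
    fun p => add_nonneg (Ff_nonneg hT _) (Ff_nonneg hT _)
  have hmaj : Summable (fun p : ℤ × ℤ =>
      s p.1 * s p.2 * (Ff T ((p.1:ℝ) - (p.2:ℝ)) + Ff T ((p.1:ℝ) + (p.2:ℝ) + a))) := by
    apply Summable.of_nonneg_of_le
      (fun p => mul_nonneg (mul_nonneg (norm_nonneg _) (norm_nonneg _)) (hFF_nn p))
      (fun p => ?_) (hss.mul_right (2*T))
    have h1 := Ff_le_T hT ((p.1:ℝ) - (p.2:ℝ))
    have h2 := Ff_le_T hT ((p.1:ℝ) + (p.2:ℝ) + a)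
    exact mul_le_mul_of_nonneg_left (by linarith) (mul_nonneg (norm_nonneg _) (norm_nonneg _))
  have hInorm_sum : Summable (fun p : ℤ × ℤ => ‖I p‖) :=
    Summable.of_nonneg_of_le (fun p => norm_nonneg _) hI_norm hmaj
  have p1 := piece (fun k => s k^2) hs2 (fun k l => Ff T ((k:ℝ) - (l:ℝ))) C₁
    (fun k l => Ff_nonneg hT _) (fun k => sq_nonneg _) hg1
  have p2 := piece (fun k => s k^2) hs2 (fun k l => Ff T ((k:ℝ) + (l:ℝ) + a)) C₂
    (fun k l => Ff_nonneg hT _) (fun k => sq_nonneg _) hg2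
  have hswap1 : Summable (fun p : ℤ × ℤ => s p.2^2 * Ff T ((p.1:ℝ) - (p.2:ℝ))) ∧
      ∑' p : ℤ × ℤ, s p.2^2 * Ff T ((p.1:ℝ) - (p.2:ℝ)) = C₁ * ∑' k, s k^2 := by
    have hcg : ∀ p : ℤ × ℤ, s p.1^2 * Ff T ((p.1:ℝ) - (p.2:ℝ)) =
        (fun q : ℤ × ℤ => s q.2^2 * Ff T ((q.1:ℝ) - (q.2:ℝ))) ((Equiv.prodComm ℤ ℤ) p) := by
      intro p
      simp only [Equiv.prodComm_apply, Prod.fst_swap, Prod.snd_swap]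
      rw [show ((p.2:ℝ) - (p.1:ℝ)) = -((p.1:ℝ) - (p.2:ℝ)) by ring, Ff_even]
    constructor
    · exact (Equiv.prodComm ℤ ℤ).summable_iff.mp (p1.1.congr hcg)
    · rw [← (Equiv.prodComm ℤ ℤ).tsum_eq (fun q : ℤ × ℤ => s q.2^2 * Ff T ((q.1:ℝ) - (q.2:ℝ))),
        ← tsum_congr hcg]
      exact p1.2
  have hswap2 : Summable (fun p : ℤ × ℤ => s p.2^2 * Ff T ((p.1:ℝ) + (p.2:ℝ) + a)) ∧
      ∑' p : ℤ × ℤ, s p.2^2 * Ff T ((p.1:ℝ) + (p.2:ℝ) + a) = C₂ * ∑' k, s k^2 := by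
    have hcg : ∀ p : ℤ × ℤ, s p.1^2 * Ff T ((p.1:ℝ) + (p.2:ℝ) + a) =
        (fun q : ℤ × ℤ => s q.2^2 * Ff T ((q.1:ℝ) + (q.2:ℝ) + a)) ((Equiv.prodComm ℤ ℤ) p) := by
      intro p
      simp only [Equiv.prodComm_apply, Prod.fst_swap, Prod.snd_swap]
      rw [show ((p.2:ℝ) + (p.1:ℝ) + a) = ((p.1:ℝ) + (p.2:ℝ) + a) by ring]
    constructor
    · exact (Equiv.prodComm ℤ ℤ).summable_iff.mp (p2.1.congr hcg)
    · rw [← (Equiv.prodComm ℤ ℤ).tsum_eq (fun q : ℤ × ℤ => s q.2^2 * Ff T ((q.1:ℝ) + (q.2:ℝ) + a)),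
        ← tsum_congr hcg]
      exact p2.2
  have hu_prod : ∀ t : ℝ, u t * (starRingEnd ℂ) (u t) = ∑' p : ℤ × ℤ,
      (c p.1 * ee (φ p.1 t)) * (starRingEnd ℂ) (c p.2 * ee (φ p.2 t)) := by
    intro t
    have hf : Summable (fun k : ℤ => ‖c k * ee (φ k t)‖) :=
      hs1.congr (fun k => (hnorm_term k t).symm)
    have hg : Summable (fun k : ℤ => ‖(starRingEnd ℂ) (c k * ee (φ k t))‖) :=
      hs1.congr (fun k => ((RCLike.norm_conj _).trans (hnorm_term k t)).symm)
    have hconj : (starRingEnd ℂ) (u t) = ∑' k : ℤ, (starRingEnd ℂ) (c k * ee (φ k t)) := by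
      simp only [hudef, starRingEnd_apply]
      exact tsum_star
    rw [hudef, hconj]
    exact tsum_mul_tsum_of_summable_norm hf hg
  have hu2_int : IntegrableOn (fun t : ℝ => u t * (starRingEnd ℂ) (u t)) (Set.Ioc 0 T) :=
    (hu_cont.mul (continuous_star.comp hu_cont)).integrableOn_Ioc
  have hlhs : (∫ t in (0:ℝ)..T, ‖u t‖^2) =
      RCLike.re (∫ t in Set.Ioc (0:ℝ) T, u t * (starRingEnd ℂ) (u t)) := by
    rw [intervalIntegral.integral_of_le hT.le, ← integral_re hu2_int]
    apply setIntegral_congr_fun measurableSet_Ioc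
    intro t _
    simp [Complex.mul_conj, Complex.normSq_eq_norm_sq, RCLike.re_to_complex,
      ← Complex.ofReal_pow, Complex.ofReal_re]
  have hinter : (∫ t in Set.Ioc (0:ℝ) T, u t * (starRingEnd ℂ) (u t)) = ∑' p : ℤ × ℤ, I p := by
    have hint_each : ∀ p : ℤ × ℤ, IntegrableOn (fun t : ℝ =>
        (c p.1 * ee (φ p.1 t)) * (starRingEnd ℂ) (c p.2 * ee (φ p.2 t))) (Set.Ioc 0 T) :=
      fun p => (hcont_pair p).integrableOn_Ioc
    have hnorm_int : Summable (fun p : ℤ × ℤ => ∫ t in Set.Ioc (0:ℝ) T,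
        ‖(c p.1 * ee (φ p.1 t)) * (starRingEnd ℂ) (c p.2 * ee (φ p.2 t))‖) := by
      have heq : ∀ p : ℤ × ℤ, (∫ t in Set.Ioc (0:ℝ) T,
          ‖(c p.1 * ee (φ p.1 t)) * (starRingEnd ℂ) (c p.2 * ee (φ p.2 t))‖)
            = T * (s p.1 * s p.2) := by
        intro p
        rw [setIntegral_congr_fun measurableSet_Ioc (fun t _ => hnorm_pair p t), setIntegral_const]
        rw [measureReal_def, Real.volume_Ioc, smul_eq_mul, sub_zero, ENNReal.toReal_ofReal hT.le]
      exact (hss.mul_left T).congr (fun p => (heq p).symm)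
    calc (∫ t in Set.Ioc (0:ℝ) T, u t * (starRingEnd ℂ) (u t))
        = ∫ t in Set.Ioc (0:ℝ) T, ∑' p : ℤ × ℤ,
            (c p.1 * ee (φ p.1 t)) * (starRingEnd ℂ) (c p.2 * ee (φ p.2 t)) := by
          apply setIntegral_congr_fun measurableSet_Ioc; intro t _; exact hu_prod t
    _ = ∑' p : ℤ × ℤ, I p := (integral_tsum_of_summable_integral_norm hint_each hnorm_int).symm
  have hSnn : (0:ℝ) ≤ ∑' k, s k^2 := tsum_nonneg (fun k => sq_nonneg _)
  have hptbound : ∀ p : ℤ × ℤ,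
      s p.1 * s p.2 * (Ff T ((p.1:ℝ) - (p.2:ℝ)) + Ff T ((p.1:ℝ) + (p.2:ℝ) + a)) ≤
      1/2 * (s p.1^2 * Ff T ((p.1:ℝ) - (p.2:ℝ)) + s p.1^2 * Ff T ((p.1:ℝ) + (p.2:ℝ) + a)
        + (s p.2^2 * Ff T ((p.1:ℝ) - (p.2:ℝ)) + s p.2^2 * Ff T ((p.1:ℝ) + (p.2:ℝ) + a))) := by
    intro p
    have h2 := two_mul_le_add_sq (s p.1) (s p.2)
    have h3 := mul_le_mul_of_nonneg_right h2 (hFF_nn p)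
    nlinarith [h3]
  have hsum4 : Summable (fun p : ℤ × ℤ =>
      1/2 * (s p.1^2 * Ff T ((p.1:ℝ) - (p.2:ℝ)) + s p.1^2 * Ff T ((p.1:ℝ) + (p.2:ℝ) + a)
        + (s p.2^2 * Ff T ((p.1:ℝ) - (p.2:ℝ)) + s p.2^2 * Ff T ((p.1:ℝ) + (p.2:ℝ) + a)))) :=
    (((p1.1.add p2.1).add (hswap1.1.add hswap2.1)).mul_left (1/2))
  have htsum4 : (∑' p : ℤ × ℤ,
      1/2 * (s p.1^2 * Ff T ((p.1:ℝ) - (p.2:ℝ)) + s p.1^2 * Ff T ((p.1:ℝ) + (p.2:ℝ) + a)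
        + (s p.2^2 * Ff T ((p.1:ℝ) - (p.2:ℝ)) + s p.2^2 * Ff T ((p.1:ℝ) + (p.2:ℝ) + a))))
      = (C₁ + C₂) * ∑' k, s k^2 := by
    rw [tsum_mul_left, Summable.tsum_add (p1.1.add p2.1) (hswap1.1.add hswap2.1), Summable.tsum_add p1.1 p2.1,
      Summable.tsum_add hswap1.1 hswap2.1, p1.2, p2.2, hswap1.2, hswap2.2]
    ring
  show (∫ t in (0:ℝ)..T, ‖u t‖^2) ≤ (C₁ + C₂ + 1) * ∑' k, s k^2
  calc (∫ t in (0:ℝ)..T, ‖u t‖ ^ 2)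
      = RCLike.re (∑' p : ℤ × ℤ, I p) := by rw [hlhs, hinter]
  _ ≤ ‖∑' p : ℤ × ℤ, I p‖ := RCLike.re_le_norm _
  _ ≤ ∑' p : ℤ × ℤ, ‖I p‖ := norm_tsum_le_tsum_norm hInorm_sum
  _ ≤ ∑' p : ℤ × ℤ, s p.1 * s p.2 * (Ff T ((p.1:ℝ) - (p.2:ℝ)) + Ff T ((p.1:ℝ) + (p.2:ℝ) + a)) :=
      Summable.tsum_le_tsum hI_norm hInorm_sum hmaj
  _ ≤ ∑' p : ℤ × ℤ,
      1/2 * (s p.1^2 * Ff T ((p.1:ℝ) - (p.2:ℝ)) + s p.1^2 * Ff T ((p.1:ℝ) + (p.2:ℝ) + a)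
        + (s p.2^2 * Ff T ((p.1:ℝ) - (p.2:ℝ)) + s p.2^2 * Ff T ((p.1:ℝ) + (p.2:ℝ) + a))) :=
      Summable.tsum_le_tsum hptbound hmaj hsum4
  _ = (C₁ + C₂) * ∑' k, s k^2 := htsum4
  _ ≤ (C₁ + C₂ + 1) * ∑' k, s k^2 := by nlinarith [hSnn]
end
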